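/- arXiv:2212.13836 — 10 statements merged into one kernel-verified Lean document; each statement's English description precedes it below -/
import Mathlib

section
/- Let G be a group, A an abelian group regarded as a G-module with trivial action, n a natural number, γ ∈ G, and let C_γ ≤ G be the centralizer of γ. Suppose c : G^{n+1} → A is an inhomogeneous (n+1)-cocycle of G with coefficients in A, i.e. for all g_0, …, g_{n+1} ∈ G one has c(g_1,…,g_{n+1}) + Σ_{i=1}^{n+1} (−1)^i c(g_0,…,g_{i−1}·g_i,…,g_{n+1}) + (−1)^{n+2} c(g_0,…,g_n) = 0. Define the transgressed cochain tr_γ(c) : (C_γ)^n → A by tr_γ(c)(h_1,…,h_n) := Σ_{j=0}^{n} (−1)^j c(h_1,…,h_j, γ, h_{j+1},…,h_n), i.e. the alternating sum over all ways of inserting γ among the arguments. Then tr_γ(c) is an inhomogeneous n-cocycle of the group C_γ with coefficients in A (trivial action). -/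
open Finset

/-- The inhomogeneous coboundary operator on cochains of a group `G` with values in an
abelian group `A` with trivial `G`-action:
`(d c)(g₀,…,gₙ) = c(g₁,…,gₙ) + ∑_{i=1}^{n} (−1)^i c(g₀,…,g_{i−1}·g_i,…,gₙ)
  + (−1)^{n+1} c(g₀,…,g_{n−1})`. -/
def dCochain {G : Type*} [Group G] {A : Type*} [AddCommGroup A] {n : ℕ}
    (c : (Fin n → G) → A) : (Fin (n + 1) → G) → A :=
  fun g => c (fun i => g i.succ) +
    ∑ j : Fin (n + 1), ((-1 : ℤ) ^ ((j : ℕ) + 1)) • c (Fin.contractNth j (· * ·) g)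

/-- The transgression of an `(n+1)`-cochain at `γ`: the alternating sum over all ways of
inserting `γ` among the arguments (which are taken in the centralizer of `γ`):
`tr_γ(c)(h₁,…,hₙ) = ∑_{j=0}^{n} (−1)^j c(h₁,…,h_j, γ, h_{j+1},…,hₙ)`. -/
def transgression {G : Type*} [Group G] {A : Type*} [AddCommGroup A] {n : ℕ} (γ : G)
    (c : (Fin (n + 1) → G) → A) :
    (Fin n → Subgroup.centralizer ({γ} : Set G)) → A :=
  fun h => ∑ j : Fin (n + 1), ((-1 : ℤ) ^ (j : ℕ)) • c (j.insertNth γ (fun i => (h i : G)))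

namespace TransgressionProof

lemma insertNth_eval {β : Type*} {N : ℕ} (j : Fin (N + 1)) (x : β) (p : Fin N → β)
    (m : Fin (N + 1)) :
    (j.insertNth x p : Fin (N + 1) → β) m =
      if h : (m : ℕ) < (j : ℕ) then p ⟨m, by omega⟩
      else if h' : (m : ℕ) = (j : ℕ) then x
      else p ⟨(m : ℕ) - 1, by omega⟩ := by
  rcases lt_trichotomy ((m : ℕ)) ((j : ℕ)) with hlt | heq | hgt
  · rw [dif_pos hlt, Fin.insertNth_apply_below (show m < j from hlt)]
    simp only [eq_rec_constant]
    exact congrArg p (Fin.ext (by simp))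
  · rw [dif_neg (by omega), dif_pos heq, show m = j from Fin.ext heq,
      Fin.insertNth_apply_same]
  · rw [dif_neg (by omega), dif_neg (by omega),
      Fin.insertNth_apply_above (show j < m from hgt)]
    simp only [eq_rec_constant]
    exact congrArg p (Fin.ext (by simp))

lemma contractNth_eval {β : Type*} {N : ℕ} (j : Fin (N + 1)) (op : β → β → β)
    (g : Fin (N + 1) → β) (m : Fin N) :
    Fin.contractNth j op g m =
      if (m : ℕ) < (j : ℕ) then g ⟨m, by omega⟩
      else if (m : ℕ) = (j : ℕ) then op (g ⟨m, by omega⟩) (g ⟨(m : ℕ) + 1, by omega⟩)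
      else g ⟨(m : ℕ) + 1, by omega⟩ := by
  rcases lt_trichotomy ((m : ℕ)) ((j : ℕ)) with hlt | heq | hgt
  · rw [if_pos hlt, Fin.contractNth_apply_of_lt _ _ _ _ hlt]
    exact congrArg g (Fin.ext rfl)
  · rw [if_neg (by omega), if_pos heq, Fin.contractNth_apply_of_eq _ _ _ _ heq]
    exact congrArg₂ op (congrArg g (Fin.ext rfl)) (congrArg g (Fin.ext rfl))
  · rw [if_neg (by omega), if_neg (by omega), Fin.contractNth_apply_of_gt _ _ _ _ hgt]
    exact congrArg g (Fin.ext rfl)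

lemma npow_congr (a b : ℕ) (h : a % 2 = b % 2) : ((-1 : ℤ)) ^ a = (-1 : ℤ) ^ b := by
  rcases Nat.even_or_odd a with ha | ha
  · have hb : Even b := by rw [Nat.even_iff] at *; omega
    rw [ha.neg_one_pow, hb.neg_one_pow]
  · have hb : Odd b := by rw [Nat.odd_iff] at *; omega
    rw [ha.neg_one_pow, hb.neg_one_pow]

lemma spow {A : Type*} [AddCommGroup A] (a : ℕ) (x : A) :
    ((-1 : ℤ) ^ a) • x + ((-1 : ℤ) ^ (a + 1)) • x = 0 := by
  rw [pow_succ, mul_neg_one, neg_smul, add_neg_cancel]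

section Tuples
variable {G : Type*} [Group G] {n : ℕ} (γ : G) (H : Fin (n + 1) → G)

lemma tupA (i k : Fin (n + 1)) (hki : (k : ℕ) ≤ (i : ℕ)) :
    Fin.contractNth i.succ (· * ·) (Fin.insertNth k.castSucc γ H)
      = Fin.insertNth k γ (Fin.contractNth i (· * ·) H) := by
  funext m
  simp only [contractNth_eval, insertNth_eval, Fin.val_succ, Fin.coe_castSucc, Fin.val_mk]
  split_ifs <;>
    first
      | rfl
      | omega
      | contradiction
      | exact congrArg H (Fin.ext (by simp only [Fin.val_mk, Fin.val_succ] <;> omega))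
      | exact congrArg₂ (· * ·)
          (congrArg H (Fin.ext (by simp only [Fin.val_mk, Fin.val_succ] <;> omega)))
          (congrArg H (Fin.ext (by simp only [Fin.val_mk, Fin.val_succ] <;> omega)))

lemma tupB (i k : Fin (n + 1)) (hik : (i : ℕ) < (k : ℕ)) :
    Fin.contractNth i.castSucc (· * ·) (Fin.insertNth k.succ γ H)
      = Fin.insertNth k γ (Fin.contractNth i (· * ·) H) := by
  funext m
  simp only [contractNth_eval, insertNth_eval, Fin.val_succ, Fin.coe_castSucc, Fin.val_mk]
  split_ifs <;>
    first
      | rfl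
      | omega
      | contradiction
      | exact congrArg H (Fin.ext (by simp only [Fin.val_mk, Fin.val_succ] <;> omega))
      | exact congrArg₂ (· * ·)
          (congrArg H (Fin.ext (by simp only [Fin.val_mk, Fin.val_succ] <;> omega)))
          (congrArg H (Fin.ext (by simp only [Fin.val_mk, Fin.val_succ] <;> omega)))

lemma tupC (hH : ∀ k, H k * γ = γ * H k) (i : Fin (n + 1)) :
    Fin.contractNth i.castSucc (· * ·) (Fin.insertNth i.succ γ H)
      = Fin.contractNth i.castSucc (· * ·) (Fin.insertNth i.castSucc γ H) := by
  funext m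
  simp only [contractNth_eval, insertNth_eval, Fin.val_succ, Fin.coe_castSucc, Fin.val_mk]
  split_ifs <;>
    first
      | rfl
      | omega
      | contradiction
      | exact congrArg H (Fin.ext (by simp only [Fin.val_mk, Fin.val_succ] <;> omega))
      | exact hH _
      | (rw [show (⟨(m : ℕ), by omega⟩ : Fin (n + 1)) = ⟨(m : ℕ) + 1 - 1, by omega⟩ from
          Fin.ext (by simp only [Fin.val_mk] <;> omega)]; exact hH _)

lemma tupD :
    Fin.contractNth (Fin.last (n + 1)) (· * ·) (Fin.insertNth (Fin.last (n + 1)) γ H)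
      = H := by
  funext m
  simp only [contractNth_eval, insertNth_eval, Fin.val_last, Fin.val_mk]
  split_ifs <;>
    first
      | rfl
      | omega
      | contradiction
      | exact congrArg H (Fin.ext (by simp only [Fin.val_mk, Fin.val_succ] <;> omega))

lemma tupE0 :
    (fun m : Fin (n + 1) => (Fin.insertNth (0 : Fin (n + 2)) γ H : Fin (n + 2) → G) m.succ)
      = H := by
  funext m
  simp only [insertNth_eval, Fin.val_succ, Fin.val_zero, Fin.val_mk]
  split_ifs <;>
    first
      | rfl
      | omega
      | contradiction
      | exact congrArg H (Fin.ext (by simp only [Fin.val_mk, Fin.val_succ] <;> omega))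

lemma tupE (k : Fin (n + 1)) :
    (fun m : Fin (n + 1) => (Fin.insertNth k.succ γ H : Fin (n + 2) → G) m.succ)
      = Fin.insertNth k γ (fun m : Fin n => H m.succ) := by
  funext m
  simp only [insertNth_eval, Fin.val_succ, Fin.coe_castSucc, Fin.val_mk]
  split_ifs <;>
    first
      | rfl
      | omega
      | contradiction
      | exact congrArg H (Fin.ext (by simp only [Fin.val_mk, Fin.val_succ] <;> omega))

end Tuples

section Main
variable {G : Type*} [Group G] {A : Type*} [AddCommGroup A] {n : ℕ}

lemma sumR (γ : G) (c : (Fin (n + 1) → G) → A) (H : Fin (n + 1) → G)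
    (hH : ∀ k, H k * γ = γ * H k) :
    ∑ j : Fin (n + 2), ((-1 : ℤ) ^ (j : ℕ)) • dCochain c (Fin.insertNth j γ H)
      = -(∑ k : Fin (n + 1), ((-1 : ℤ) ^ (k : ℕ)) •
            c (Fin.insertNth k γ (fun m : Fin n => H m.succ)))
        - ∑ i : Fin (n + 1), ∑ k : Fin (n + 1), ((-1 : ℤ) ^ ((i : ℕ) + (k : ℕ) + 1)) •
            c (Fin.insertNth k γ (Fin.contractNth i (· * ·) H)) := by
  have merge : ∀ (a b : ℕ) (x : A),
      ((-1 : ℤ) ^ a) • (((-1 : ℤ) ^ (b + 1)) • x) = ((-1 : ℤ) ^ (a + b + 1)) • x := by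
    intro a b x
    rw [smul_smul, ← pow_add, show a + (b + 1) = a + b + 1 from by omega]
  have step1 : ∑ j : Fin (n + 2), ((-1 : ℤ) ^ (j : ℕ)) • dCochain c (Fin.insertNth j γ H)
      = (∑ j : Fin (n + 2), ((-1 : ℤ) ^ (j : ℕ)) •
          c (fun m => (Fin.insertNth j γ H : Fin (n + 2) → G) m.succ))
        + ∑ j : Fin (n + 2), ∑ i : Fin (n + 2), ((-1 : ℤ) ^ ((j : ℕ) + (i : ℕ) + 1)) •
            c (Fin.contractNth i (· * ·) (Fin.insertNth j γ H)) := by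
    simp only [dCochain, smul_add, Finset.smul_sum, merge, Finset.sum_add_distrib]
  rw [step1]
  -- face part
  have faceA : (∑ j : Fin (n + 2), ((-1 : ℤ) ^ (j : ℕ)) •
      c (fun m => (Fin.insertNth j γ H : Fin (n + 2) → G) m.succ))
      = c H + -(∑ k : Fin (n + 1), ((-1 : ℤ) ^ (k : ℕ)) •
          c (Fin.insertNth k γ (fun m : Fin n => H m.succ))) := by
    rw [Fin.sum_univ_succ]
    simp only [Fin.val_zero, pow_zero, one_smul, tupE0, tupE, Fin.val_succ, pow_succ,
      mul_neg_one, neg_smul, Finset.sum_neg_distrib]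
  -- double sum part
  have hsplit : ∀ j : Fin (n + 2),
      (∑ i : Fin (n + 2), ((-1 : ℤ) ^ ((j : ℕ) + (i : ℕ) + 1)) •
          c (Fin.contractNth i (· * ·) (Fin.insertNth j γ H)))
        = ((-1 : ℤ) ^ ((j : ℕ) + (j : ℕ) + 1)) •
            c (Fin.contractNth j (· * ·) (Fin.insertNth j γ H))
          + ∑ i : Fin (n + 1), ((-1 : ℤ) ^ ((j : ℕ) + ((j.succAbove i : Fin (n + 2)) : ℕ) + 1)) •
              c (Fin.contractNth (j.succAbove i) (· * ·) (Fin.insertNth j γ H)) :=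
    fun j => Fin.sum_univ_succAbove _ j
  rw [Finset.sum_congr rfl (fun j _ => hsplit j), Finset.sum_add_distrib]
  -- diagonal sum
  have hdiagsplit : (∑ j : Fin (n + 2), ((-1 : ℤ) ^ ((j : ℕ) + (j : ℕ) + 1)) •
      c (Fin.contractNth j (· * ·) (Fin.insertNth j γ H)))
      = ((-1 : ℤ) ^ (((Fin.last (n + 1) : Fin (n + 2)) : ℕ)
            + ((Fin.last (n + 1) : Fin (n + 2)) : ℕ) + 1)) •
          c (Fin.contractNth (Fin.last (n + 1)) (· * ·)
              (Fin.insertNth (Fin.last (n + 1)) γ H))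
        + ∑ i : Fin (n + 1), ((-1 : ℤ) ^ (((i.castSucc : Fin (n + 2)) : ℕ)
            + ((i.castSucc : Fin (n + 2)) : ℕ) + 1)) •
            c (Fin.contractNth i.castSucc (· * ·) (Fin.insertNth i.castSucc γ H)) := by
    rw [Fin.sum_univ_succAbove
      (fun j : Fin (n + 2) => ((-1 : ℤ) ^ ((j : ℕ) + (j : ℕ) + 1)) •
        c (Fin.contractNth j (· * ·) (Fin.insertNth j γ H))) (Fin.last (n + 1))]
    simp only [Fin.succAbove_last]
  rw [hdiagsplit]
  have hcorner : ((-1 : ℤ) ^ (((Fin.last (n + 1) : Fin (n + 2)) : ℕ)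
        + ((Fin.last (n + 1) : Fin (n + 2)) : ℕ) + 1)) •
      c (Fin.contractNth (Fin.last (n + 1)) (· * ·)
          (Fin.insertNth (Fin.last (n + 1)) γ H)) = -(c H) := by
    rw [tupD, Fin.val_last,
      show ((-1 : ℤ) ^ ((n + 1) + (n + 1) + 1)) = -1 from
        Odd.neg_one_pow ⟨n + 1, by omega⟩, neg_one_smul]
  rw [hcorner]
  -- off-diagonal double sum: swap order and split at i.succ
  have hswap : (∑ j : Fin (n + 2), ∑ i : Fin (n + 1),
      ((-1 : ℤ) ^ ((j : ℕ) + ((j.succAbove i : Fin (n + 2)) : ℕ) + 1)) •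
        c (Fin.contractNth (j.succAbove i) (· * ·) (Fin.insertNth j γ H)))
      = ∑ i : Fin (n + 1), ∑ j : Fin (n + 2),
        ((-1 : ℤ) ^ ((j : ℕ) + ((j.succAbove i : Fin (n + 2)) : ℕ) + 1)) •
          c (Fin.contractNth (j.succAbove i) (· * ·) (Fin.insertNth j γ H)) :=
    Finset.sum_comm
  rw [hswap]
  have hinner : ∀ i : Fin (n + 1),
      (∑ j : Fin (n + 2), ((-1 : ℤ) ^ ((j : ℕ) + ((j.succAbove i : Fin (n + 2)) : ℕ) + 1)) •
        c (Fin.contractNth (j.succAbove i) (· * ·) (Fin.insertNth j γ H)))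
      = (((-1 : ℤ) ^ (((i.succ : Fin (n + 2)) : ℕ)
            + (((i.succ : Fin (n + 2)).succAbove i : Fin (n + 2)) : ℕ) + 1)) •
          c (Fin.contractNth ((i.succ : Fin (n + 2)).succAbove i) (· * ·)
              (Fin.insertNth i.succ γ H)))
        + ∑ k : Fin (n + 1),
          ((-1 : ℤ) ^ (((i.succ.succAbove k : Fin (n + 2)) : ℕ)
              + (((i.succ.succAbove k).succAbove i : Fin (n + 2)) : ℕ) + 1)) •
            c (Fin.contractNth ((i.succ.succAbove k).succAbove i) (· * ·)
                (Fin.insertNth (i.succ.succAbove k) γ H)) :=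
    fun i => Fin.sum_univ_succAbove _ i.succ
  rw [Finset.sum_congr rfl (fun i _ => hinner i), Finset.sum_add_distrib]
  -- the adjacent term cancels the diagonal castSucc term
  have hadj : ∀ i : Fin (n + 1),
      (((-1 : ℤ) ^ (((i.castSucc : Fin (n + 2)) : ℕ)
            + ((i.castSucc : Fin (n + 2)) : ℕ) + 1)) •
          c (Fin.contractNth i.castSucc (· * ·) (Fin.insertNth i.castSucc γ H)))
        + (((-1 : ℤ) ^ (((i.succ : Fin (n + 2)) : ℕ)
            + (((i.succ : Fin (n + 2)).succAbove i : Fin (n + 2)) : ℕ) + 1)) •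
          c (Fin.contractNth ((i.succ : Fin (n + 2)).succAbove i) (· * ·)
              (Fin.insertNth i.succ γ H))) = 0 := by
    intro i
    rw [Fin.succAbove_of_castSucc_lt _ _ (Fin.castSucc_lt_succ : i.castSucc < i.succ), tupC γ H hH i]
    simp only [Fin.coe_castSucc, Fin.val_succ]
    rw [show (i : ℕ) + 1 + (i : ℕ) + 1 = ((i : ℕ) + (i : ℕ) + 1) + 1 from by omega]
    exact spow _ _
  -- the off-diagonal terms
  have hoff : ∀ i k : Fin (n + 1),
      (((-1 : ℤ) ^ (((i.succ.succAbove k : Fin (n + 2)) : ℕ)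
          + (((i.succ.succAbove k).succAbove i : Fin (n + 2)) : ℕ) + 1)) •
        c (Fin.contractNth ((i.succ.succAbove k).succAbove i) (· * ·)
            (Fin.insertNth (i.succ.succAbove k) γ H)))
      = -(((-1 : ℤ) ^ ((i : ℕ) + (k : ℕ) + 1)) •
          c (Fin.insertNth k γ (Fin.contractNth i (· * ·) H))) := by
    intro i k
    rcases le_or_gt (k : ℕ) (i : ℕ) with h | h
    · rw [show i.succ.succAbove k = k.castSucc from
        Fin.succAbove_of_castSucc_lt _ _
          (by rw [Fin.lt_def]; simp only [Fin.coe_castSucc, Fin.val_succ]; omega)]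
      rw [show (Fin.castSucc k : Fin (n + 2)).succAbove i = i.succ from
        Fin.succAbove_of_le_castSucc _ _
          (by rw [Fin.le_def]; simp only [Fin.coe_castSucc]; omega)]
      rw [tupA γ H i k h]
      simp only [Fin.coe_castSucc, Fin.val_succ]
      rw [show ((-1 : ℤ) ^ ((k : ℕ) + ((i : ℕ) + 1) + 1))
          = (-1 : ℤ) ^ (((i : ℕ) + (k : ℕ) + 1) + 1) from npow_congr _ _ (by omega),
        pow_succ, mul_neg_one, neg_smul]
    · rw [show i.succ.succAbove k = k.succ from
        Fin.succAbove_of_le_castSucc _ _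
          (by rw [Fin.le_def]; simp only [Fin.coe_castSucc, Fin.val_succ]; omega)]
      rw [show (Fin.succ k : Fin (n + 2)).succAbove i = i.castSucc from
        Fin.succAbove_of_castSucc_lt _ _
          (by rw [Fin.lt_def]; simp only [Fin.coe_castSucc, Fin.val_succ]; omega)]
      rw [tupB γ H i k h]
      simp only [Fin.coe_castSucc, Fin.val_succ]
      rw [show ((-1 : ℤ) ^ ((k : ℕ) + 1 + (i : ℕ) + 1))
          = (-1 : ℤ) ^ (((i : ℕ) + (k : ℕ) + 1) + 1) from npow_congr _ _ (by omega),
        pow_succ, mul_neg_one, neg_smul]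
  rw [faceA]
  rw [Finset.sum_congr rfl (fun i _ => Finset.sum_congr rfl (fun k _ => hoff i k))]
  rw [show (∑ i : Fin (n + 1), ∑ k : Fin (n + 1),
      -(((-1 : ℤ) ^ ((i : ℕ) + (k : ℕ) + 1)) •
        c (Fin.insertNth k γ (Fin.contractNth i (· * ·) H))))
      = -(∑ i : Fin (n + 1), ∑ k : Fin (n + 1),
        ((-1 : ℤ) ^ ((i : ℕ) + (k : ℕ) + 1)) •
          c (Fin.insertNth k γ (Fin.contractNth i (· * ·) H))) from by
    simp only [Finset.sum_neg_distrib]]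
  have hzero : (∑ i : Fin (n + 1), ((-1 : ℤ) ^ (((i.castSucc : Fin (n + 2)) : ℕ)
        + ((i.castSucc : Fin (n + 2)) : ℕ) + 1)) •
        c (Fin.contractNth i.castSucc (· * ·) (Fin.insertNth i.castSucc γ H)))
      + (∑ i : Fin (n + 1), ((-1 : ℤ) ^ (((i.succ : Fin (n + 2)) : ℕ)
          + (((i.succ : Fin (n + 2)).succAbove i : Fin (n + 2)) : ℕ) + 1)) •
          c (Fin.contractNth ((i.succ : Fin (n + 2)).succAbove i) (· * ·)
              (Fin.insertNth i.succ γ H))) = 0 := by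
    rw [← Finset.sum_add_distrib]
    exact Finset.sum_eq_zero (fun i _ => hadj i)
  have final : ∀ u v t1 t2 : A, u + v = 0 →
      c H + -t1 + (-c H + u + (v + -t2)) = -t1 - t2 := by
    intro u v t1 t2 huv
    rw [eq_neg_of_add_eq_zero_left huv]
    abel
  exact final _ _ _ _ hzero
lemma coe_contract (γ : G) {m : ℕ} (i : Fin (m + 1))
    (h : Fin (m + 1) → (Subgroup.centralizer ({γ} : Set G))) :
    (fun t : Fin m => ((Fin.contractNth i (· * ·) h t :
        Subgroup.centralizer ({γ} : Set G)) : G))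
      = Fin.contractNth i (· * ·) (fun t => (h t : G)) := by
  funext t
  rw [contractNth_eval, contractNth_eval]
  split_ifs <;> simp

lemma sumL (γ : G) (c : (Fin (n + 1) → G) → A)
    (h : Fin (n + 1) → (Subgroup.centralizer ({γ} : Set G))) :
    dCochain (transgression γ c) h
      = (∑ k : Fin (n + 1), ((-1 : ℤ) ^ (k : ℕ)) •
            c (Fin.insertNth k γ (fun m : Fin n => ((h m.succ : G)))))
        + ∑ i : Fin (n + 1), ∑ k : Fin (n + 1), ((-1 : ℤ) ^ ((i : ℕ) + (k : ℕ) + 1)) •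
            c (Fin.insertNth k γ (Fin.contractNth i (· * ·) (fun m => (h m : G)))) := by
  have merge2 : ∀ (a b : ℕ) (x : A),
      ((-1 : ℤ) ^ (a + 1)) • (((-1 : ℤ) ^ b) • x) = ((-1 : ℤ) ^ (a + b + 1)) • x := by
    intro a b x
    rw [smul_smul, ← pow_add, show (a + 1) + b = a + b + 1 from by omega]
  simp only [dCochain, transgression, Finset.smul_sum, merge2, coe_contract]

end Main

end TransgressionProof

/-- If `c` is an inhomogeneous `(n+1)`-cocycle of `G` with coefficients in the
trivial `G`-module `A`, then its transgression at `γ` is an inhomogeneous `n`-cocycle of the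
centralizer `C_γ` with coefficients in `A`. -/
theorem transgression_isCocycle {G : Type*} [Group G] {A : Type*} [AddCommGroup A]
    (n : ℕ) (γ : G) (c : (Fin (n + 1) → G) → A)
    (hc : dCochain c = 0) :
    dCochain (transgression γ c) = 0 := by
  funext h
  have hH : ∀ k : Fin (n + 1),
      (fun i => ((h i : G))) k * γ = γ * (fun i => ((h i : G))) k :=
    fun k => (Subgroup.mem_centralizer_iff.mp (h k).2 γ (Set.mem_singleton γ)).symm
  have h0 : ∑ j : Fin (n + 2), ((-1 : ℤ) ^ (j : ℕ)) •
      dCochain c (Fin.insertNth j γ (fun i => ((h i : G)))) = 0 := by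
    simp [hc]
  rw [TransgressionProof.sumR γ c (fun i => ((h i : G))) hH] at h0
  have h1 : ∀ x y : A, -x - y = 0 → x + y = 0 := by
    intro x y hxy
    have hxy2 : x + y = -(-x - y) := by abel
    rw [hxy2, hxy, neg_zero]
  show dCochain (transgression γ c) h = 0
  rw [TransgressionProof.sumL γ c h]
  exact h1 _ _ h0
end

section
/- Let G be a group, A an abelian group with trivial G-action, n ≥ 1, γ ∈ G with centralizer C_γ, and for each degree m let tr_γ denote the transgression map sending an m-cochain c : G^m → A to the (m−1)-cochain of C_γ given by tr_γ(c)(h_1,…,h_{m−1}) := Σ_{j=0}^{m−1} (−1)^j c(h_1,…,h_j, γ, h_{j+1},…,h_{m−1}). Then for every n-cochain b : G^n → A, the transgression tr_γ(d b) of its coboundary is itself a coboundary of an (n−1)-cochain of C_γ. Consequently, together with the fact that tr_γ sends cocycles to cocycles, the transgression formula induces a well-defined group homomorphism H^{n+1}(G; A) → H^n(C_γ; A) on group cohomology with trivial coefficients. -/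
open Finset

/-- The inhomogeneous coboundary operator on cochains of a group `G` with values in an
abelian group `A` with trivial `G`-action, as an additive group homomorphism:
`(d c)(g₀,…,gₙ) = c(g₁,…,gₙ) + ∑_{i=1}^{n} (−1)^i c(g₀,…,g_{i−1}·g_i,…,gₙ)
  + (−1)^{n+1} c(g₀,…,g_{n−1})`. -/
def dHom (G : Type*) [Group G] (A : Type*) [AddCommGroup A] (n : ℕ) :
    ((Fin n → G) → A) →+ ((Fin (n + 1) → G) → A) where
  toFun c := fun g => c (fun i => g i.succ) +
    ∑ j : Fin (n + 1), ((-1 : ℤ) ^ ((j : ℕ) + 1)) • c (Fin.contractNth j (· * ·) g)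
  map_zero' := by
    funext g
    simp
  map_add' c₁ c₂ := by
    funext g
    simp [smul_add, Finset.sum_add_distrib]
    abel

/-- Group cohomology `H^{m+1}(G; A)` with trivial coefficients: `(m+1)`-cocycles modulo
coboundaries of `m`-cochains. -/
abbrev Hgrp (G : Type*) [Group G] (A : Type*) [AddCommGroup A] (m : ℕ) :=
  (dHom G A (m + 1)).ker ⧸ ((dHom G A m).range.addSubgroupOf (dHom G A (m + 1)).ker)

section aux
variable {α : Type*} {n : ℕ}

theorem insertNth_succ_cons (j : Fin (n + 1)) (x a : α) (p : Fin n → α) :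
    Fin.insertNth j.succ x (Fin.cons a p : Fin (n + 1) → α) =
      Fin.cons (α := fun _ => α) a (Fin.insertNth j x p) := by
  funext i
  induction i using Fin.cases with
  | zero =>
    conv_lhs => rw [← Fin.succ_succAbove_zero j]
    rw [Fin.insertNth_apply_succAbove]
    simp
  | succ i =>
    induction i using Fin.succAboveCases (i := j) with
    | x => simp
    | p k =>
      rw [← Fin.succ_succAbove_succ, Fin.insertNth_apply_succAbove]
      simp [Fin.insertNth_apply_succAbove]

theorem contractNth_zero_cons (op : α → α → α) (a : α) (p : Fin (n + 1) → α) :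
    Fin.contractNth 0 op (Fin.cons a p) = Fin.cons (op a (p 0)) (Fin.tail p) := by
  funext k
  induction k using Fin.cases with
  | zero =>
    rw [Fin.contractNth_apply_of_eq _ _ _ _ (by simp)]
    simp [Fin.succ_zero_eq_one]
  | succ k =>
    rw [Fin.contractNth_apply_of_gt _ _ _ _ (by simp)]
    simp [Fin.tail]

theorem contractNth_succ_cons (j : Fin (n + 1)) (op : α → α → α) (a : α) (p : Fin (n + 1) → α) :
    Fin.contractNth j.succ op (Fin.cons a p) = Fin.cons a (Fin.contractNth j op p) := by
  funext k
  induction k using Fin.cases with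
  | zero =>
    rw [Fin.contractNth_apply_of_lt _ _ _ _ (by simp)]
    simp
  | succ k =>
    simp only [Fin.cons_succ]
    rcases lt_trichotomy (k : ℕ) (j : ℕ) with h | h | h
    · rw [Fin.contractNth_apply_of_lt _ _ _ _ (by simpa using h),
        Fin.contractNth_apply_of_lt _ _ _ _ h]
      rw [← Fin.succ_castSucc, Fin.cons_succ]
    · rw [Fin.contractNth_apply_of_eq _ _ _ _ (by simpa using h),
        Fin.contractNth_apply_of_eq _ _ _ _ h]
      rw [← Fin.succ_castSucc, Fin.cons_succ, Fin.cons_succ]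
    · rw [Fin.contractNth_apply_of_gt _ _ _ _ (by simpa using h),
        Fin.contractNth_apply_of_gt _ _ _ _ h]
      rw [Fin.cons_succ]

end aux

section main
variable {G : Type*} [Group G] {A : Type*} [AddCommGroup A] {n : ℕ}

theorem d_cons (n : ℕ) (c : (Fin (n + 1) → G) → A) (a : G) (p : Fin (n + 1) → G) :
    dHom G A (n + 1) c (Fin.cons a p) =
      c p - c (Fin.cons (a * p 0) (Fin.tail p)) + c (Fin.cons a (Fin.tail p)) -
        dHom G A n (fun t => c (Fin.cons a t)) p := by
  show (c _ + _) = _ - _ + _ - (_ + _)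
  rw [Fin.sum_univ_succ]
  simp only [Fin.val_zero, pow_one, zero_add, neg_smul, one_smul, contractNth_zero_cons,
    contractNth_succ_cons, Fin.val_succ]
  have h1 : (fun i : Fin (n + 1) => (Fin.cons a p : Fin (n + 2) → G) i.succ) = p := rfl
  have h2 : ∀ j : Fin (n + 1), ((-1 : ℤ) ^ ((j : ℕ) + 1 + 1)) •
      c (Fin.cons a (Fin.contractNth j (· * ·) p)) =
      -(((-1 : ℤ) ^ ((j : ℕ) + 1)) • (fun t => c (Fin.cons a t)) (Fin.contractNth j (· * ·) p)) := by
    intro j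
    rw [pow_succ]
    simp
  rw [h1]
  rw [Finset.sum_congr rfl fun j _ => h2 j, Finset.sum_neg_distrib]
  have h3 : (fun (i : Fin n) => p i.succ) = Fin.tail p := rfl
  rw [h3]
  abel

theorem coe_cons {γ : G} (a : Subgroup.centralizer ({γ} : Set G))
    (p : Fin n → Subgroup.centralizer ({γ} : Set G)) :
    (fun i => ((Fin.cons a p : Fin (n + 1) → _) i : G)) =
      Fin.cons (a : G) (fun i => (p i : G)) := by
  funext i
  induction i using Fin.cases <;> simp

theorem tr_cons (γ : G) (c : (Fin (n + 2) → G) → A) (a : Subgroup.centralizer ({γ} : Set G))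
    (p : Fin n → Subgroup.centralizer ({γ} : Set G)) :
    transgression γ c (Fin.cons a p) =
      c (Fin.cons γ (Fin.cons (a : G) (fun i => (p i : G)))) -
        transgression γ (fun t => c (Fin.cons (a : G) t)) p := by
  show (∑ j : Fin (n + 2), _) = _ - ∑ j : Fin (n + 1), _
  rw [Fin.sum_univ_succ]
  rw [show (fun i => ((Fin.cons a p : Fin (n + 1) → _) i : G)) =
      Fin.cons (a : G) (fun i => (p i : G)) from coe_cons a p]
  simp only [Fin.val_zero, pow_zero, one_smul, Fin.insertNth_zero', insertNth_succ_cons,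
    Fin.val_succ, pow_succ, mul_comm ((-1 : ℤ) ^ _), neg_one_mul, neg_smul,
    Finset.sum_neg_distrib]
  abel

theorem tr_shift (γ : G) (F : G → (Fin (n + 1) → G) → A)
    (p : Fin (n + 1) → Subgroup.centralizer ({γ} : Set G)) :
    transgression γ (fun q : Fin (n + 2) → G => F (q 0) (Fin.tail q)) p =
      F γ (fun i => (p i : G)) -
        transgression γ (F (p 0 : G)) (Fin.tail p) := by
  show (∑ j : Fin (n + 2), _) = _ - ∑ j : Fin (n + 1), _
  rw [Fin.sum_univ_succ]
  have hp : (fun i => (p i : G)) =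
      Fin.cons ((p 0 : G)) (fun i => (Fin.tail p i : G)) := by
    funext i
    induction i using Fin.cases <;> simp [Fin.tail]
  rw [hp]
  simp only [Fin.insertNth_zero', insertNth_succ_cons, Fin.val_zero, pow_zero, one_smul,
    Fin.cons_zero, Fin.tail_cons, Fin.val_succ, pow_succ, mul_comm ((-1 : ℤ) ^ _),
    neg_one_mul, neg_smul, Finset.sum_neg_distrib]
  abel

theorem tr_add (γ : G) (c₁ c₂ : (Fin (n + 1) → G) → A) :
    transgression γ (c₁ + c₂) = transgression γ c₁ + transgression γ c₂ := by
  funext h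
  simp [transgression, smul_add, Finset.sum_add_distrib]

theorem tr_sub (γ : G) (c₁ c₂ : (Fin (n + 1) → G) → A) :
    transgression γ (c₁ - c₂) = transgression γ c₁ - transgression γ c₂ := by
  funext h
  simp [transgression, smul_sub, Finset.sum_sub_distrib]

theorem tr_zero (γ : G) : transgression γ (0 : (Fin (n + 1) → G) → A) = 0 := by
  funext h
  simp [transgression]

theorem d_restrict {γ : G} (c : (Fin n → G) → A)
    (g : Fin (n + 1) → Subgroup.centralizer ({γ} : Set G)) :
    dHom (Subgroup.centralizer ({γ} : Set G)) A n (fun t => c (fun i => (t i : G))) g =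
      dHom G A n c (fun i => (g i : G)) := by
  have key : ∀ j : Fin (n + 1),
      (fun k => ((Fin.contractNth j (· * ·) g k : _) : G)) =
        Fin.contractNth j (· * ·) (fun i => (g i : G)) := by
    intro j
    funext k
    simp only [Fin.contractNth]
    split_ifs <;> simp
  simp only [dHom, AddMonoidHom.coe_mk, ZeroHom.coe_mk]
  congr 1
  refine Finset.sum_congr rfl fun j _ => ?_
  rw [key j]
end main

section main2
variable {G : Type*} [Group G] {A : Type*} [AddCommGroup A] {n : ℕ}

theorem contractNth_last {α : Type*} (op : α → α → α) (g : Fin (n + 1) → α) :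
    Fin.contractNth (Fin.last n) op g = fun k => g k.castSucc :=
  funext fun k => Fin.contractNth_apply_of_lt _ _ _ _ k.isLt

theorem d_zero (u : (Fin 0 → G) → A) : dHom G A 0 u = 0 := by
  funext g
  show u _ + ∑ j : Fin 1, _ = _
  rw [Fin.sum_univ_one, Subsingleton.elim (fun i : Fin 0 => g i.succ)
    (Fin.contractNth 0 (· * ·) g)]
  simp

theorem key (γ : G) : ∀ (m : ℕ) (c : (Fin (m + 1) → G) → A),
    dHom (Subgroup.centralizer ({γ} : Set G)) A m (transgression γ c) =
      - transgression γ ((dHom G A (m + 1)) c) := by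
  intro m
  induction m with
  | zero =>
    intro c
    funext h
    have hcomm : (h 0 : G) * γ = γ * (h 0 : G) :=
      Subgroup.mem_centralizer_singleton_iff.mp (h 0).2
    have hnorm : ∀ (x : G) (e : Fin 0 → G), (Fin.cons x e : Fin 1 → G) = Fin.cons x ![] := by
      intro x e
      rw [Subsingleton.elim e ![]]
    rw [d_zero, Pi.zero_apply, Pi.neg_apply]
    have hcoe : (fun i => ((h i : G))) = Fin.cons (α := fun _ => G) (↑(h 0)) ![] := by
      funext i
      induction i using Fin.cases with
      | zero => rfl
      | succ i => exact i.elim0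
    have htail : ∀ (x : G) (q : Fin 1 → G),
        (fun i : Fin 1 => (Fin.cons x q : Fin 2 → G) i.succ) = q := by
      intro x q
      funext i
      simp
    simp only [transgression, dHom, AddMonoidHom.coe_mk, ZeroHom.coe_mk, hcoe,
      Fin.sum_univ_succ, Fin.sum_univ_zero, Fin.insertNth_zero', insertNth_succ_cons,
      contractNth_zero_cons, contractNth_succ_cons, htail, hnorm,
      Fin.val_zero, Fin.val_succ, pow_zero, pow_succ, pow_one, one_smul, neg_smul, one_mul,
      neg_neg, mul_one, neg_one_mul, Fin.cons_zero, Fin.cons_succ, add_zero]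
    rw [hcomm]
    abel
  | succ M IH =>
    intro c
    funext h
    obtain ⟨a, p, rfl⟩ : ∃ a p, h = Fin.cons a p :=
      ⟨h 0, Fin.tail h, (Fin.cons_self_tail h).symm⟩
    have hcomm : (a : G) * γ = γ * (a : G) :=
      Subgroup.mem_centralizer_singleton_iff.mp a.2
    have htail : (fun i => ((Fin.tail p i : _) : G)) = Fin.tail (fun i => ((p i : _) : G)) := rfl
    -- LHS
    rw [Pi.neg_apply, d_cons, tr_cons γ c (a * p 0) (Fin.tail p), tr_cons γ c a (Fin.tail p)]
    have e1 : (fun t => transgression γ c (Fin.cons a t)) =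
        (fun t => c (Fin.cons γ (Fin.cons (a : G) (fun i => ((t i : _) : G))))) -
          transgression γ (fun s => c (Fin.cons (a : G) s)) := by
      funext t
      rw [tr_cons]
      rfl
    rw [e1, map_sub, IH (fun s => c (Fin.cons (↑a : G) s))]
    rw [Pi.sub_apply]
    have e3 := d_restrict (γ := γ) (fun s => c (Fin.cons γ (Fin.cons (↑a : G) s))) p
    beta_reduce at e3
    rw [e3]
    -- RHS
    rw [tr_cons γ (dHom G A (M + 2) c) a p]
    rw [d_cons (M + 1) c γ (Fin.cons (↑a : G) (fun i => ((p i : _) : G)))]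
    simp only [Fin.cons_zero, Fin.tail_cons]
    rw [d_cons M (fun t => c (Fin.cons γ t)) (↑a : G) (fun i => ((p i : _) : G))]
    have e2 : (fun t : Fin (M + 2) → G => dHom G A (M + 2) c (Fin.cons (↑a : G) t)) =
        c -
          (fun q : Fin (M + 2) → G => c (Fin.cons ((↑a : G) * q 0) (Fin.tail q))) +
          (fun q : Fin (M + 2) → G => c (Fin.cons (↑a : G) (Fin.tail q))) -
          dHom G A (M + 1) (fun t => c (Fin.cons (↑a : G) t)) := by
      funext q
      rw [d_cons]
      rfl
    rw [e2, tr_sub, tr_add, tr_sub]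
    have e4 := tr_shift γ (fun x q => c (Fin.cons ((↑a : G) * x) q)) p
    have e5 := tr_shift γ (fun _ q => c (Fin.cons (↑a : G) q)) p
    beta_reduce at e4 e5
    simp only [Pi.sub_apply, Pi.add_apply, Pi.neg_apply]
    rw [e4, e5]
    simp only [Subgroup.coe_mul, htail, hcomm]
    abel

end main2

/-- For every `(m+1)`-cochain `b` of `G` (i.e. every `n`-cochain with `n = m+1 ≥ 1`),
the transgression at `γ` of its coboundary is itself a coboundary of an `m`-cochain of the
centralizer `C_γ`.  Consequently (together with the fact that transgression sends cocycles to
cocycles), transgression induces a well-defined homomorphism of group cohomology groups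
`H^{m+2}(G; A) →+ H^{m+1}(C_γ; A)` sending the class of a cocycle `c` to the class of
`tr_γ(c)`. -/
theorem transgression_descends {G : Type*} [Group G] {A : Type*} [AddCommGroup A]
    (m : ℕ) (γ : G) :
    (∀ b : (Fin (m + 1) → G) → A,
      ∃ a : (Fin m → Subgroup.centralizer ({γ} : Set G)) → A,
        dHom (Subgroup.centralizer ({γ} : Set G)) A m a =
          transgression γ (dHom G A (m + 1) b)) ∧
    ∃ φ : Hgrp G A (m + 1) →+ Hgrp (Subgroup.centralizer ({γ} : Set G)) A m,
      ∀ (c : (Fin (m + 2) → G) → A) (hc : c ∈ (dHom G A (m + 2)).ker)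
        (hc' : transgression γ c ∈ (dHom (Subgroup.centralizer ({γ} : Set G)) A (m + 1)).ker),
        φ (QuotientAddGroup.mk ⟨c, hc⟩) = QuotientAddGroup.mk ⟨transgression γ c, hc'⟩ := by
  set Cγ := Subgroup.centralizer ({γ} : Set G) with hCγ
  have part1 : ∀ b : (Fin (m + 1) → G) → A,
      ∃ a : (Fin m → Cγ) → A,
        dHom Cγ A m a = transgression γ (dHom G A (m + 1) b) := by
    intro b
    exact ⟨-(transgression γ b), by rw [map_neg, key γ m b, neg_neg]⟩
  refine ⟨part1, ?_⟩
  have hker : ∀ x : ((Fin (m + 2) → G) → A), x ∈ (dHom G A (m + 2)).ker →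
      transgression γ x ∈ (dHom Cγ A (m + 1)).ker := by
    intro x hx
    rw [AddMonoidHom.mem_ker] at hx ⊢
    rw [key γ (m + 1) x, hx, tr_zero, neg_zero]
  let T : (dHom G A (m + 2)).ker →+ (dHom Cγ A (m + 1)).ker :=
    AddMonoidHom.mk' (fun x => ⟨transgression γ x.1, hker x.1 x.2⟩)
      (fun x y => Subtype.ext (tr_add γ x.1 y.1))
  let f : (dHom G A (m + 2)).ker →+ Hgrp Cγ A m :=
    (QuotientAddGroup.mk' ((dHom Cγ A m).range.addSubgroupOf (dHom Cγ A (m + 1)).ker)).comp T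
  have h0 : ∀ x ∈ (dHom G A (m + 1)).range.addSubgroupOf (dHom G A (m + 2)).ker, f x = 0 := by
    intro x hx
    rw [AddSubgroup.mem_addSubgroupOf] at hx
    obtain ⟨b, hb⟩ := hx
    obtain ⟨a, ha⟩ := part1 b
    have hmem : T x ∈ (dHom Cγ A m).range.addSubgroupOf (dHom Cγ A (m + 1)).ker := by
      rw [AddSubgroup.mem_addSubgroupOf]
      refine ⟨a, ?_⟩
      rw [ha, hb]
      rfl
    exact (QuotientAddGroup.eq_zero_iff (T x)).mpr hmem
  refine ⟨QuotientAddGroup.lift _ f h0, ?_⟩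
  intro c hc hc'
  show f ⟨c, hc⟩ = _
  rfl
end

section
/- Let G be a group acting on a set X, and for each conjugacy class c of G fix a representative g_c ∈ G. For g ∈ G let X^g := {x ∈ X | g·x = x} denote the g-fixed points and C_g the centralizer of g; the restricted action of C_g preserves X^g. Then the inertia groupoid Fun(B ℤ, X ⫽ G) of the action groupoid X ⫽ G is equivalent, as a category, to the disjoint union (sigma category) over all conjugacy classes c of G of the action groupoids X^{g_c} ⫽ C_{g_c}. In particular, taking X a one-point set, Fun(B ℤ, B G) is equivalent to the disjoint union over conjugacy classes [g] of the one-object groupoids B C_g on the centralizers. -/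
open CategoryTheory

/-- The action of the centralizer of `g` on the `g`-fixed points `X^g = {x | g • x = x}`. -/
instance fixedSMul {G : Type*} [Group G] {X : Type*} [MulAction G X] (g : G) :
    SMul (Subgroup.centralizer ({g} : Set G)) {x : X // g • x = x} where
  smul h x := ⟨(h : G) • (x : X), by
    have hc : g * (h : G) = (h : G) * g :=
      Subgroup.mem_centralizer_iff.mp h.2 g (Set.mem_singleton g)
    rw [smul_smul, hc, ← smul_smul, x.2]⟩

instance fixedMulAction {G : Type*} [Group G] {X : Type*} [MulAction G X] (g : G) :
    MulAction (Subgroup.centralizer ({g} : Set G)) {x : X // g • x = x} where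
  one_smul x := Subtype.ext (by
    show ((1 : Subgroup.centralizer ({g} : Set G)) : G) • (x : X) = x
    simp)
  mul_smul a b x := Subtype.ext (by
    show ((a * b : Subgroup.centralizer ({g} : Set G)) : G) • (x : X)
      = (a : G) • ((b : G) • (x : X))
    rw [Subgroup.coe_mul, mul_smul])

namespace InertiaAux

open CategoryTheory

/-- Constructor for morphisms in an action groupoid. -/
def acHomMk {H : Type*} [Group H] {Y : Type*} [MulAction H Y]
    {p q : ActionCategory H Y} (g : H) (h : g • p.back = q.back) : p ⟶ q := ⟨g, h⟩

@[simp] theorem acHomMk_val {H : Type*} [Group H] {Y : Type*} [MulAction H Y]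
    {p q : ActionCategory H Y} (g : H) (h : g • p.back = q.back) :
    (acHomMk g h).val = g := rfl

/-- Equivalence of sigma categories built from componentwise equivalences. -/
noncomputable def sigmaEquivalence {I : Type*} {C D : I → Type*} [∀ i, Category (C i)]
    [∀ i, Category (D i)] (E : ∀ i, C i ≌ D i) : (Σ i, C i) ≌ (Σ i, D i) :=
  CategoryTheory.Equivalence.mk
    (Sigma.desc fun i => (E i).functor ⋙ Sigma.incl i)
    (Sigma.desc fun i => (E i).inverse ⋙ Sigma.incl i)
    (Sigma.natIso fun i => NatIso.ofComponents
      (fun X => (Sigma.incl i).mapIso ((E i).unitIso.app X))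
      (fun f => congrArg Sigma.SigmaHom.mk ((E i).unitIso.hom.naturality f)))
    (Sigma.natIso fun i => NatIso.ofComponents
      (fun X => (Sigma.incl i).mapIso ((E i).counitIso.app X))
      (fun f => congrArg Sigma.SigmaHom.mk ((E i).counitIso.hom.naturality f)))

section SingleObjEquiv

variable (H : Type*) [Group H] (Y : Type*) [MulAction H Y] [Unique Y]

/-- For a one-point `Y`, the one-object groupoid on `H` is equivalent to the action
groupoid `Y ⫽ H`. -/
noncomputable def singleObjEquivActionCategory : SingleObj H ≌ ActionCategory H Y := by
  refine CategoryTheory.Equivalence.mk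
    ({ obj := fun _ => ActionCategory.objEquiv H Y default
       map := fun h => ⟨(h : H), Subsingleton.elim (α := Y) _ _⟩
       map_id := fun _ => Subtype.ext rfl
       map_comp := fun _ _ => Subtype.ext rfl } : SingleObj H ⥤ ActionCategory H Y)
    (ActionCategory.π H Y)
    (NatIso.ofComponents (fun _ => Iso.refl _) (fun f => by
      simp only [Iso.refl_hom, Category.comp_id, Category.id_comp]
      rfl))
    (NatIso.ofComponents
      (fun p =>
        { hom := acHomMk 1 (by rw [one_smul]; exact Subsingleton.elim (α := Y) _ _)
          inv := acHomMk 1 (by rw [one_smul]; exact Subsingleton.elim (α := Y) _ _)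
          hom_inv_id := Subtype.ext (one_mul 1)
          inv_hom_id := Subtype.ext (one_mul 1) })
      (fun {p q} f => by
        apply Subtype.ext
        show (1 : H) * f.1 = f.1 * 1
        rw [one_mul, mul_one]))

end SingleObjEquiv

section Main

variable {G : Type*} [Group G] {X : Type*} [MulAction G X]
variable (rep : ConjClasses G → G)

/-- The component functor from the action groupoid of the centralizer on fixed points
to the inertia groupoid. -/
def Phi (c : ConjClasses G) :
    ActionCategory (Subgroup.centralizer ({rep c} : Set G)) {x : X // rep c • x = x} ⥤
      (SingleObj (Multiplicative ℤ) ⥤ ActionCategory G X) where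
  obj p :=
    { obj := fun _ => ActionCategory.objEquiv G X
        (p.back : {x : X // rep c • x = x}).1
      map := fun n => acHomMk (rep c ^ Multiplicative.toAdd (n : Multiplicative ℤ))
        (MulAction.mem_stabilizer_iff.mp
          (zpow_mem (MulAction.mem_stabilizer_iff.mpr (p.back).2)
            (Multiplicative.toAdd (n : Multiplicative ℤ))))
      map_id := fun _ => Subtype.ext (by
        show rep c ^ Multiplicative.toAdd (1 : Multiplicative ℤ) = 1
        simp)
      map_comp := fun {x y z} f g => Subtype.ext (by
        let f' : Multiplicative ℤ := f
        let g' : Multiplicative ℤ := g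
        show rep c ^ Multiplicative.toAdd (g' * f')
          = rep c ^ Multiplicative.toAdd g' * rep c ^ Multiplicative.toAdd f'
        rw [toAdd_mul, zpow_add]) }
  map {p q} f :=
    { app := fun _ => acHomMk (f.1 : Subgroup.centralizer ({rep c} : Set G)).val
        (congrArg Subtype.val f.2)
      naturality := fun x y n => Subtype.ext (by
        let n' : Multiplicative ℤ := n
        have hcm : Commute (rep c) (f.1 : Subgroup.centralizer ({rep c} : Set G)).val :=
          Subgroup.mem_centralizer_iff.mp (f.1 : Subgroup.centralizer ({rep c} : Set G)).2
            (rep c) (Set.mem_singleton _)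
        show (f.1 : Subgroup.centralizer ({rep c} : Set G)).val
              * rep c ^ Multiplicative.toAdd n'
            = rep c ^ Multiplicative.toAdd n'
              * (f.1 : Subgroup.centralizer ({rep c} : Set G)).val
        exact (hcm.zpow_left (Multiplicative.toAdd n')).eq.symm) }
  map_id p := by
    apply NatTrans.ext
    funext x
    exact Subtype.ext rfl
  map_comp f g := by
    apply NatTrans.ext
    funext x
    exact Subtype.ext rfl

/-- The total functor from the disjoint union of centralizer action groupoids to the
inertia groupoid. -/
def PhiSigma :
    (Σ c : ConjClasses G,
        ActionCategory (Subgroup.centralizer ({rep c} : Set G)) {x : X // rep c • x = x}) ⥤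
      (SingleObj (Multiplicative ℤ) ⥤ ActionCategory G X) :=
  Sigma.desc (Phi rep)

theorem phiSigma_faithful : (PhiSigma (X := X) rep).Faithful := by
  constructor
  rintro ⟨c, p⟩ ⟨c', q⟩ f g h
  change CategoryTheory.Sigma.SigmaHom _ _ at f g
  cases f with
  | mk f =>
    cases g with
    | mk g =>
      have hval := congrArg
        (fun σ => ((σ : _ ⟶ _).app (SingleObj.star (Multiplicative ℤ))).val) h
      have : f = g := Subtype.ext (Subtype.ext hval)
      rw [this]

theorem phiSigma_full (hrep : ∀ c, ConjClasses.mk (rep c) = c) :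
    (PhiSigma (X := X) rep).Full := by
  constructor
  rintro ⟨c, p⟩ ⟨c', q⟩ σ
  have hnat := σ.naturality (X := SingleObj.star (Multiplicative ℤ))
    (Y := SingleObj.star (Multiplicative ℤ)) (Multiplicative.ofAdd (1 : ℤ))
  have hval : (σ.app (SingleObj.star (Multiplicative ℤ))).val * rep c
      = rep c' * (σ.app (SingleObj.star (Multiplicative ℤ))).val := by
    have h1 := congrArg Subtype.val hnat
    have h2 : (σ.app (SingleObj.star (Multiplicative ℤ))).val
          * rep c ^ Multiplicative.toAdd (Multiplicative.ofAdd (1 : ℤ))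
        = rep c' ^ Multiplicative.toAdd (Multiplicative.ofAdd (1 : ℤ))
          * (σ.app (SingleObj.star (Multiplicative ℤ))).val := h1
    simpa using h2
  have hcc : c' = c := by
    rw [← hrep c, ← hrep c']
    symm
    apply ConjClasses.mk_eq_mk_iff_isConj.mpr
    apply isConj_iff.mpr
    exact ⟨(σ.app (SingleObj.star (Multiplicative ℤ))).val, by
      rw [mul_inv_eq_iff_eq_mul]
      exact hval⟩
  subst hcc
  have hmem : (σ.app (SingleObj.star (Multiplicative ℤ))).val
      ∈ Subgroup.centralizer ({rep c'} : Set G) := by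
    apply Subgroup.mem_centralizer_iff.mpr
    rintro g hg
    rw [Set.mem_singleton_iff] at hg
    subst hg
    exact hval.symm
  refine ⟨Sigma.SigmaHom.mk (acHomMk
    (⟨(σ.app (SingleObj.star (Multiplicative ℤ))).val, hmem⟩ :
      Subgroup.centralizer ({rep c'} : Set G))
    (Subtype.ext (σ.app (SingleObj.star (Multiplicative ℤ))).2) : p ⟶ q), ?_⟩
  apply NatTrans.ext
  funext x
  exact Subtype.ext rfl

theorem phiSigma_essSurj (hrep : ∀ c, ConjClasses.mk (rep c) = c) :
    (PhiSigma (X := X) rep).EssSurj := by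
  constructor
  intro F
  have key : ∀ n : Multiplicative ℤ,
      (F.map (X := SingleObj.star (Multiplicative ℤ)) (Y := SingleObj.star (Multiplicative ℤ))
        n).val
      = (F.map (X := SingleObj.star (Multiplicative ℤ)) (Y := SingleObj.star (Multiplicative ℤ))
          (Multiplicative.ofAdd (1 : ℤ))).val ^ Multiplicative.toAdd n := by
    let φ : Multiplicative ℤ →* G :=
      { toFun := fun n : Multiplicative ℤ =>
          (F.map (X := SingleObj.star (Multiplicative ℤ))
            (Y := SingleObj.star (Multiplicative ℤ)) n).val
        map_one' := congrArg Subtype.val (F.map_id (SingleObj.star (Multiplicative ℤ)))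
        map_mul' := fun m n => congrArg Subtype.val
          (F.map_comp (X := SingleObj.star (Multiplicative ℤ))
            (Y := SingleObj.star (Multiplicative ℤ))
            (Z := SingleObj.star (Multiplicative ℤ)) n m) }
    exact fun n => MonoidHom.apply_mint G φ n
  set g : G := (F.map (X := SingleObj.star (Multiplicative ℤ))
    (Y := SingleObj.star (Multiplicative ℤ)) (Multiplicative.ofAdd (1 : ℤ))).val with hgdef
  have hg : g • (F.obj (SingleObj.star (Multiplicative ℤ))).back
      = (F.obj (SingleObj.star (Multiplicative ℤ))).back :=
    (F.map (X := SingleObj.star (Multiplicative ℤ))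
      (Y := SingleObj.star (Multiplicative ℤ)) (Multiplicative.ofAdd (1 : ℤ))).2
  obtain ⟨k, hk⟩ := isConj_iff.mp
    (ConjClasses.mk_eq_mk_iff_isConj.mp (hrep (ConjClasses.mk g)))
  have hsemi : SemiconjBy k (rep (ConjClasses.mk g)) g := by
    show k * rep (ConjClasses.mk g) = g * k
    conv_rhs => rw [← hk]
    rw [inv_mul_cancel_right]
  have hy : rep (ConjClasses.mk g)
        • (k⁻¹ • (F.obj (SingleObj.star (Multiplicative ℤ))).back)
      = k⁻¹ • (F.obj (SingleObj.star (Multiplicative ℤ))).back := by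
    have hmove : rep (ConjClasses.mk g) * k⁻¹ = k⁻¹ * g := by
      conv_rhs => rw [← hk]
      rw [← mul_assoc, ← mul_assoc, inv_mul_cancel, one_mul]
    rw [smul_smul, hmove, ← smul_smul, hg]
  refine ⟨⟨ConjClasses.mk g, ActionCategory.objEquiv _ _
    (⟨k⁻¹ • (F.obj (SingleObj.star (Multiplicative ℤ))).back, hy⟩ :
      {x : X // rep (ConjClasses.mk g) • x = x})⟩, ⟨?_⟩⟩
  refine NatIso.ofComponents
    (fun x => @asIso _ _ _ _ (acHomMk (p := ((PhiSigma rep).obj _).obj x) (q := F.obj x) k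
      (smul_inv_smul k ((F.obj (SingleObj.star (Multiplicative ℤ))).back))) (IsIso.of_groupoid _)) ?_
  intro x y n
  apply Subtype.ext
  let n' : Multiplicative ℤ := n
  show k * rep (ConjClasses.mk g) ^ Multiplicative.toAdd n' = (F.map n).val * k
  have hk2 : (F.map n).val = g ^ Multiplicative.toAdd n' := key n'
  rw [hk2]
  exact (hsemi.zpow_right (Multiplicative.toAdd n')).eq

/-- The main equivalence: the inertia groupoid of the action groupoid is the disjoint
union over conjugacy classes of the centralizer fixed-point action groupoids. -/
noncomputable def inertiaEquiv (hrep : ∀ c, ConjClasses.mk (rep c) = c) :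
    (SingleObj (Multiplicative ℤ) ⥤ ActionCategory G X) ≌
      (Σ c : ConjClasses G,
        ActionCategory (Subgroup.centralizer ({rep c} : Set G)) {x : X // rep c • x = x}) := by
  haveI := phiSigma_faithful (X := X) rep
  haveI := phiSigma_full (X := X) rep hrep
  haveI := phiSigma_essSurj (X := X) rep hrep
  haveI : (PhiSigma (X := X) rep).IsEquivalence := {}
  exact (PhiSigma (X := X) rep).asEquivalence.symm

end Main

end InertiaAux


/-- Let `G` act on `X`, and fix a representative `rep c ∈ G` for every conjugacy
class `c` of `G`.  Then the inertia groupoid `Fun(B ℤ, X ⫽ G)` of the action groupoid is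
equivalent, as a category, to the disjoint union (sigma category) over all conjugacy classes
`c` of the action groupoids `X^{rep c} ⫽ C_{rep c}` of the centralizers acting on the fixed
points.  In particular (the case of a one-point `X`), `Fun(B ℤ, B G)` is equivalent to the
disjoint union over conjugacy classes of the one-object groupoids on the centralizers. -/
theorem inertia_actionCategory_equiv_sigma {G : Type*} [Group G] {X : Type*} [MulAction G X]
    (rep : ConjClasses G → G) (hrep : ∀ c, ConjClasses.mk (rep c) = c) :
    Nonempty ((SingleObj (Multiplicative ℤ) ⥤ ActionCategory G X) ≌
      (Σ c : ConjClasses G,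
        ActionCategory (Subgroup.centralizer ({rep c} : Set G)) {x : X // rep c • x = x})) ∧
    Nonempty ((SingleObj (Multiplicative ℤ) ⥤ SingleObj G) ≌
      (Σ c : ConjClasses G, SingleObj (Subgroup.centralizer ({rep c} : Set G)))) := by
  constructor
  · exact ⟨InertiaAux.inertiaEquiv rep hrep⟩
  · haveI : ∀ c : ConjClasses G, Unique {x : PUnit.{1} // rep c • x = x} :=
      fun c => ⟨⟨⟨PUnit.unit, rfl⟩⟩, fun x => Subtype.ext (Subsingleton.elim _ _)⟩
    refine ⟨((InertiaAux.singleObjEquivActionCategory G PUnit.{1}).congrRight).trans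
      ((InertiaAux.inertiaEquiv (X := PUnit.{1}) rep hrep).trans
        (InertiaAux.sigmaEquivalence (fun c =>
          (InertiaAux.singleObjEquivActionCategory
            (Subgroup.centralizer ({rep c} : Set G)) {x : PUnit.{1} // rep c • x = x}).symm)))⟩
end

section
/- Let G be a group, n a natural number, and F : B ℤ × [n] → B G a functor, where [n] denotes the linear order {0 < 1 < ⋯ < n} viewed as a category. Write γ := F(1, id_0) ∈ G for the image of the generator of ℤ at stage 0, and h_i := F(0, i → i+1) ∈ G (for 0 ≤ i < n) for the images of the generating edges. For 0 ≤ k ≤ n, let φ_k : [n+1] → B ℤ × [n] be the functor whose object part is the monotone surjection σ^k : [n+1] → [n] identifying k and k+1, and which sends the generating edge i → i+1 of [n+1] to (0, σ^k(i) → σ^k(i+1)) for i ≠ k, and to (1, id_k) for i = k. Then the composite functor F ∘ φ_k : [n+1] → B G, regarded as an (n+1)-simplex of the nerve of B G, is the sequence of edges (h_0, …, h_{k−1}, γ_k, h_k, …, h_{n−1}), where γ_k denotes the conjugate of γ by the composite of the first k edges, i.e. γ_k = (h_{k−1} ∘ ⋯ ∘ h_0) ∘ γ ∘ (h_{k−1}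 ∘ ⋯ ∘ h_0)^{−1} as endomorphisms of the unique object of B G. -/
open CategoryTheory

/-- The generating edge `i → i+1` of the linear order `[m] = Fin (m+1)` viewed as a
category. -/
def edgeHom {m : ℕ} (i : Fin m) : (i.castSucc : Fin (m + 1)) ⟶ i.succ :=
  homOfLE (Fin.castSucc_lt_succ : i.castSucc < i.succ).le

lemma predAbove_val' {n : ℕ} (k : Fin (n+1)) (j : Fin (n+2)) :
    ((k.predAbove j : Fin (n+1)) : ℕ) = if (k:ℕ) < (j:ℕ) then (j:ℕ) - 1 else (j:ℕ) := by
  unfold Fin.predAbove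
  have : (k.castSucc < j) ↔ (k:ℕ) < (j:ℕ) := by simp [Fin.lt_def]
  split_ifs with h1 h2 h2 <;>
    simp_all [Fin.lt_def, Fin.coe_castSucc, Fin.coe_pred, Fin.coe_castPred]

lemma key' {G : Type*} [Group G] {n : ℕ}
    (F : SingleObj (Multiplicative ℤ) × Fin (n + 1) ⥤ SingleObj G)
    {X Y : SingleObj (Multiplicative ℤ) × Fin (n + 1)} (m : X ⟶ Y)
    {a b : Fin (n + 1)} (hab : a ≤ b) (g : Multiplicative ℤ)
    (hX : X.2 = a) (hY : Y.2 = b) (hg : m.1 = g) :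
    F.map m = F.map (X := (SingleObj.star _, a)) (Y := (SingleObj.star _, b)) (g, homOfLE hab) := by
  obtain ⟨x1, x2⟩ := X
  obtain ⟨y1, y2⟩ := Y
  dsimp at hX hY
  subst hX hY hg
  have hx : x1 = SingleObj.star _ := Subsingleton.elim _ _
  have hy : y1 = SingleObj.star _ := Subsingleton.elim _ _
  subst hx hy
  have : m = (m.1, homOfLE hab) := Prod.ext rfl (Subsingleton.elim _ _)
  rw [this]

set_option maxHeartbeats 1600000 in
/-- Let `F : B ℤ × [n] ⥤ B G` be a functor, `γ := F(1, id₀)` the image of the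
generator of `ℤ` at stage `0`, and `h_i := F(0, i → i+1)` the images of the generating edges.
For `0 ≤ k ≤ n` let `φ_k : [n+1] ⥤ B ℤ × [n]` be the functor whose object part is the monotone
surjection `σ^k = Fin.predAbove k` identifying `k` and `k+1`, sending the generating edge
`i → i+1` to `(0, σ^k(i) → σ^k(i+1))` for `i ≠ k` and to `(1, id_k)` for `i = k` (the second
components of these conditions are automatic since hom-types in `[n]` are subsingletons, so
only the first components are required below).  Then the composite `F ∘ φ_k : [n+1] ⥤ B G`,
regarded as an `(n+1)`-simplex of the nerve of `B G`, is the sequence of edges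
`(h_0, …, h_{k−1}, γ_k, h_k, …, h_{n−1})`, where `γ_k = (h_{k−1} ⋯ h_0) γ (h_{k−1} ⋯ h_0)⁻¹`
is the conjugate of `γ` by the composite of the first `k` edges (composition of endomorphisms
of the unique object of `B G` agreeing with multiplication in `G`). -/
theorem evaluation_on_inertia_simplices {G : Type*} [Group G] (n : ℕ)
    (F : SingleObj (Multiplicative ℤ) × Fin (n + 1) ⥤ SingleObj G)
    (k : Fin (n + 1))
    (φ : Fin (n + 2) ⥤ SingleObj (Multiplicative ℤ) × Fin (n + 1))
    (hφobj : ∀ i, (φ.obj i).2 = k.predAbove i)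
    (hφmap : ∀ i : Fin (n + 1),
      (φ.map (edgeHom i)).1 = if i = k then Multiplicative.ofAdd 1 else 1)
    (γ : G)
    (hγ : γ = F.map (X := (SingleObj.star _, 0)) (Y := (SingleObj.star _, 0))
      (Multiplicative.ofAdd 1, 𝟙 (0 : Fin (n + 1))))
    (h : Fin n → G)
    (hh : ∀ i : Fin n, h i = F.map (X := (SingleObj.star _, i.castSucc))
      (Y := (SingleObj.star _, i.succ)) (1, edgeHom i))
    (p : G) (hp : p = (((List.ofFn h).take k).reverse).prod) :
    ∀ i : Fin (n + 1), (φ ⋙ F).map (edgeHom i) =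
      if hik : (i : ℕ) < (k : ℕ) then h ⟨i, by have := k.is_le; omega⟩
      else if hik2 : (i : ℕ) = (k : ℕ) then p * γ * p⁻¹
      else h ⟨(i : ℕ) - 1, by have := i.is_le; omega⟩ := by
  have hedge : ∀ (i : Fin n) (a b : Fin (n+1)) (hab : a ≤ b),
      a = i.castSucc → b = i.succ →
      F.map (X := (SingleObj.star _, a)) (Y := (SingleObj.star _, b)) (1, homOfLE hab) = h i := by
    intro i a b hab ha hb
    subst ha hb
    rw [hh i]
    exact (key' F (1, edgeHom i) hab 1 rfl rfl rfl).symm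
  have Qlem : ∀ (m : ℕ) (hm : m ≤ n),
      F.map (X := (SingleObj.star _, (0 : Fin (n+1)))) (Y := (SingleObj.star _, ⟨m, by omega⟩))
        (1, homOfLE (Fin.zero_le _)) = (((List.ofFn h).take m).reverse).prod := by
    intro m
    induction m with
    | zero =>
        intro _
        rw [key' F _ (le_refl (0 : Fin (n+1))) 1 rfl (Fin.ext (by simp)) rfl]
        have : (((1 : Multiplicative ℤ), homOfLE (le_refl (0 : Fin (n+1)))) :
            ((SingleObj.star _, (0 : Fin (n+1))) : SingleObj (Multiplicative ℤ) × Fin (n+1)) ⟶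
              (SingleObj.star _, (0 : Fin (n+1)))) =
            𝟙 ((SingleObj.star (Multiplicative ℤ), (0 : Fin (n+1))) :
              SingleObj (Multiplicative ℤ) × Fin (n+1)) :=
          Prod.ext rfl (Subsingleton.elim _ _)
        rw [this, F.map_id]
        rw [List.take_zero, List.reverse_nil, List.prod_nil]
        rfl
    | succ m ih =>
        intro hm
        have hmn : m < n := hm
        have z1 : (0 : Fin (n+1)) ≤ ⟨m, by omega⟩ := Fin.zero_le _
        have z2 : (⟨m, by omega⟩ : Fin (n+1)) ≤ ⟨m+1, by omega⟩ := by
          simp [Fin.le_def]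
        have hc : (((1 : Multiplicative ℤ), homOfLE (Fin.zero_le _)) :
            ((SingleObj.star _, (0 : Fin (n+1))) : SingleObj (Multiplicative ℤ) × Fin (n+1)) ⟶
              (SingleObj.star _, ⟨m+1, by omega⟩)) =
            CategoryStruct.comp
              (X := ((SingleObj.star _, (0 : Fin (n+1))) :
                SingleObj (Multiplicative ℤ) × Fin (n+1)))
              (Y := (SingleObj.star _, (⟨m, by omega⟩ : Fin (n+1))))
              (Z := (SingleObj.star _, (⟨m+1, by omega⟩ : Fin (n+1))))
              ((1 : Multiplicative ℤ), homOfLE z1) ((1 : Multiplicative ℤ), homOfLE z2) :=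
          Prod.ext rfl (Subsingleton.elim _ _)
        rw [hc, F.map_comp, SingleObj.comp_as_mul, ih (by omega)]
        have he : F.map (X := (SingleObj.star _, (⟨m, by omega⟩ : Fin (n+1))))
            (Y := (SingleObj.star _, ⟨m+1, by omega⟩)) ((1 : Multiplicative ℤ), homOfLE z2)
            = h ⟨m, hmn⟩ :=
          hedge ⟨m, hmn⟩ _ _ z2 (Fin.ext (by simp)) (Fin.ext (by simp))
        rw [he]
        rw [List.take_succ]
        simp [List.getElem?_ofFn, hmn]
  intro i
  rw [Functor.comp_map]
  rcases lt_trichotomy (i : ℕ) (k : ℕ) with hik | hik | hik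
  · -- case i < k
    rw [dif_pos hik]
    have hik' : (i : ℕ) < n := by have := k.is_le; omega
    have hab : (⟨i, hik'⟩ : Fin n).castSucc ≤ (⟨i, hik'⟩ : Fin n).succ :=
      Fin.castSucc_lt_succ.le
    have hX : (φ.obj i.castSucc).2 = (⟨i, hik'⟩ : Fin n).castSucc := by
      rw [hφobj]
      apply Fin.ext
      rw [predAbove_val']
      simp only [Fin.coe_castSucc, Fin.val_succ, Fin.castSucc_mk]
      rw [if_neg (by omega)]
    have hY : (φ.obj i.succ).2 = (⟨i, hik'⟩ : Fin n).succ := by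
      rw [hφobj]
      apply Fin.ext
      rw [predAbove_val']
      simp only [Fin.coe_castSucc, Fin.val_succ, Fin.succ_mk]
      rw [if_neg (by omega)]
    have hg := hφmap i
    rw [if_neg (fun hh' => absurd (congrArg Fin.val hh') (by omega))] at hg
    rw [key' F (φ.map (edgeHom i)) hab 1 hX hY hg]
    exact hedge ⟨i, hik'⟩ _ _ hab rfl rfl
  · -- case i = k
    rw [dif_neg (by omega), dif_pos hik]
    have hX : (φ.obj i.castSucc).2 = k := by
      rw [hφobj]
      apply Fin.ext
      rw [predAbove_val']
      simp only [Fin.coe_castSucc]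
      rw [if_neg (by omega)]
      omega
    have hY : (φ.obj i.succ).2 = k := by
      rw [hφobj]
      apply Fin.ext
      rw [predAbove_val']
      simp only [Fin.val_succ]
      rw [if_pos (by omega)]
      omega
    have hg := hφmap i
    rw [if_pos (Fin.ext hik)] at hg
    rw [key' F (φ.map (edgeHom i)) (le_refl k) (Multiplicative.ofAdd 1) hX hY hg]
    set q : G := F.map (X := (SingleObj.star _, (0 : Fin (n+1)))) (Y := (SingleObj.star _, k))
      ((1 : Multiplicative ℤ), homOfLE (Fin.zero_le k)) with hq
    have hγ' : F.map (X := (SingleObj.star _, (0 : Fin (n+1))))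
        (Y := (SingleObj.star _, (0 : Fin (n+1))))
        (Multiplicative.ofAdd 1, homOfLE (le_refl (0 : Fin (n+1)))) = γ := by
      rw [hγ]
      congr 1
    have hcomm : F.map (X := (SingleObj.star _, k)) (Y := (SingleObj.star _, k))
        (Multiplicative.ofAdd 1, homOfLE (le_refl k)) * q = q * γ := by
      have c1 : CategoryStruct.comp
            (X := ((SingleObj.star _, (0 : Fin (n+1))) :
              SingleObj (Multiplicative ℤ) × Fin (n+1)))
            (Y := (SingleObj.star _, k)) (Z := (SingleObj.star _, k))
            ((1 : Multiplicative ℤ), homOfLE (Fin.zero_le k))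
            (Multiplicative.ofAdd 1, homOfLE (le_refl k)) =
          CategoryStruct.comp
            (X := ((SingleObj.star _, (0 : Fin (n+1))) :
              SingleObj (Multiplicative ℤ) × Fin (n+1)))
            (Y := (SingleObj.star _, (0 : Fin (n+1)))) (Z := (SingleObj.star _, k))
            (Multiplicative.ofAdd 1, homOfLE (le_refl (0 : Fin (n+1))))
            ((1 : Multiplicative ℤ), homOfLE (Fin.zero_le k)) :=
        Prod.ext rfl (Subsingleton.elim _ _)
      have hFc := congrArg F.map c1
      rw [F.map_comp, F.map_comp, SingleObj.comp_as_mul, SingleObj.comp_as_mul] at hFc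
      rw [hq, hFc, hγ']
    have hqp : q = p := by
      rw [hq, hp]
      rw [key' F _ (Fin.zero_le k) 1 rfl (Fin.ext rfl) rfl]
      exact Qlem k k.is_le
    rw [show F.map (X := (SingleObj.star _, k)) (Y := (SingleObj.star _, k))
        (Multiplicative.ofAdd 1, homOfLE (le_refl k)) = q * γ * q⁻¹ from by
      rw [← hcomm]; group, hqp]
  · -- case i > k
    rw [dif_neg (by omega), dif_neg (by omega)]
    have hik' : (i : ℕ) - 1 < n := by have := i.is_le; omega
    have hab : (⟨(i : ℕ) - 1, hik'⟩ : Fin n).castSucc ≤ (⟨(i : ℕ) - 1, hik'⟩ : Fin n).succ :=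
      Fin.castSucc_lt_succ.le
    have hX : (φ.obj i.castSucc).2 = (⟨(i : ℕ) - 1, hik'⟩ : Fin n).castSucc := by
      rw [hφobj]
      apply Fin.ext
      rw [predAbove_val']
      simp only [Fin.coe_castSucc, Fin.castSucc_mk]
      rw [if_pos (by omega)]
    have hY : (φ.obj i.succ).2 = (⟨(i : ℕ) - 1, hik'⟩ : Fin n).succ := by
      rw [hφobj]
      apply Fin.ext
      rw [predAbove_val']
      simp only [Fin.val_succ, Fin.succ_mk]
      rw [if_pos (by omega)]
      omega
    have hg := hφmap i
    rw [if_neg (fun hh' => absurd (congrArg Fin.val hh') (by omega))] at hg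
    rw [key' F (φ.map (edgeHom i)) hab 1 hX hY hg]
    exact hedge ⟨(i : ℕ) - 1, hik'⟩ _ _ hab rfl rfl
end

section
/- Let q : ℝ → ℝ/ℤ denote the quotient homomorphism onto the additive circle (AddCircle). For every natural number n, the map from ℝ × ℤ^n to ℝ^{n+1} sending (r, (m_1, …, m_n)) to the tuple whose i-th entry (0 ≤ i ≤ n) is r + m_1 + ⋯ + m_i (empty sum for i = 0) is a bijection onto the (n+1)-fold fiber product of ℝ over ℝ/ℤ, i.e. onto the set {(r_0, …, r_n) ∈ ℝ^{n+1} | q(r_i) = q(r_j) for all i, j}; moreover, it is a homeomorphism onto this subspace of ℝ^{n+1} (where ℤ carries the discrete topology). -/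
open Finset

private lemma filt_succ {n : ℕ} (i : Fin n) :
    (Finset.univ.filter (fun j : Fin n => (j : ℕ) < ((i.succ : Fin (n+1)) : ℕ))) =
      insert i (Finset.univ.filter (fun j : Fin n => (j : ℕ) < ((i.castSucc : Fin (n+1)) : ℕ))) := by
  ext k
  simp only [mem_filter, mem_univ, true_and, mem_insert, Fin.val_succ, Fin.coe_castSucc,
    Fin.ext_iff]
  omega

private lemma coe_eq_coe {x y : ℝ} :
    ((x : AddCircle (1 : ℝ)) = (y : AddCircle (1 : ℝ))) ↔ ∃ k : ℤ, (k : ℝ) = x - y := by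
  rw [show ((x : AddCircle (1 : ℝ)) = (y : AddCircle (1 : ℝ))) ↔
      x - y ∈ AddSubgroup.zmultiples (1 : ℝ) from QuotientAddGroup.eq_iff_sub_mem]
  simp [AddSubgroup.mem_zmultiples_iff, zsmul_one, eq_comm]

/-- Let `q : ℝ → ℝ/ℤ` be the quotient map onto the additive circle.  For every
`n`, the map `ℝ × ℤⁿ → ℝ^{n+1}` sending `(r, (m₁, …, mₙ))` to the tuple whose `i`-th entry is
`r + m₁ + ⋯ + m_i` is a bijection onto the `(n+1)`-fold fiber product of `ℝ` over `ℝ/ℤ`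
(the set of tuples all of whose entries have the same image in `ℝ/ℤ`), and moreover a
homeomorphism onto this subspace of `ℝ^{n+1}` (with `ℤ` discrete). -/
theorem cechNerve_of_circle_cover (n : ℕ) :
    ∃ e : (ℝ × (Fin n → ℤ)) ≃ₜ
        {v : Fin (n + 1) → ℝ //
          ∀ i j, ((v i : ℝ) : AddCircle (1 : ℝ)) = ((v j : ℝ) : AddCircle (1 : ℝ))},
      ∀ (r : ℝ) (m : Fin n → ℤ) (i : Fin (n + 1)),
        (e (r, m) : Fin (n + 1) → ℝ) i =
          r + ∑ j ∈ Finset.univ.filter (fun j : Fin n => (j : ℕ) < (i : ℕ)), (m j : ℝ) := by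
  classical
  set F : ℝ × (Fin n → ℤ) → (Fin (n+1) → ℝ) := fun p i =>
    p.1 + ∑ j ∈ Finset.univ.filter (fun j : Fin n => (j : ℕ) < (i : ℕ)), (p.2 j : ℝ) with hF
  have hFmem : ∀ p, ∀ i j,
      ((F p i : ℝ) : AddCircle (1 : ℝ)) = ((F p j : ℝ) : AddCircle (1 : ℝ)) := by
    intro p i j
    rw [coe_eq_coe]
    refine ⟨(∑ k ∈ Finset.univ.filter (fun k : Fin n => (k : ℕ) < (i : ℕ)), p.2 k)
      - (∑ k ∈ Finset.univ.filter (fun k : Fin n => (k : ℕ) < (j : ℕ)), p.2 k), ?_⟩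
    simp only [hF]
    push_cast
    ring
  have hint : ∀ (v : {v : Fin (n + 1) → ℝ //
      ∀ i j, ((v i : ℝ) : AddCircle (1 : ℝ)) = ((v j : ℝ) : AddCircle (1 : ℝ))})
      (i j : Fin (n+1)), ∃ k : ℤ, (k : ℝ) = v.1 i - v.1 j := by
    intro v i j
    exact coe_eq_coe.mp (v.2 i j)
  set G : {v : Fin (n + 1) → ℝ //
      ∀ i j, ((v i : ℝ) : AddCircle (1 : ℝ)) = ((v j : ℝ) : AddCircle (1 : ℝ))} →
      ℝ × (Fin n → ℤ) := fun v => (v.1 0, fun j => ⌊v.1 j.succ - v.1 j.castSucc⌋) with hG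
  have hGspec : ∀ v (j : Fin n), ((G v).2 j : ℝ) = v.1 j.succ - v.1 j.castSucc := by
    intro v j
    obtain ⟨k, hk⟩ := hint v j.succ j.castSucc
    simp [hG, ← hk, Int.floor_intCast]
  have hF0 : ∀ p, F p 0 = p.1 := by
    intro p
    simp [hF]
  have hFstep : ∀ p (i : Fin n), F p i.succ = F p i.castSucc + p.2 i := by
    intro p i
    simp only [hF, filt_succ i]
    rw [Finset.sum_insert (by simp only [mem_filter, mem_univ, true_and, Fin.coe_castSucc]; omega)]
    ring
  refine ⟨{ toFun := fun p => ⟨F p, hFmem p⟩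
            invFun := G
            left_inv := ?_
            right_inv := ?_
            continuous_toFun := ?_
            continuous_invFun := ?_ }, fun r m i => rfl⟩
  · rintro ⟨r, m⟩
    refine Prod.ext ?_ ?_
    · simpa [hG] using hF0 (r, m)
    · funext j
      have : F (r, m) j.succ - F (r, m) j.castSucc = ((m j : ℝ)) := by
        rw [hFstep]; ring
      simp [hG, this, Int.floor_intCast]
  · intro v
    apply Subtype.ext
    funext i
    induction i using Fin.induction with
    | zero => exact hF0 (G v)
    | succ i ih =>
      have ih' : F (G v) i.castSucc = v.1 i.castSucc := ih
      show F (G v) i.succ = v.1 i.succ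
      rw [hFstep, ih', hGspec]
      ring
  · apply Continuous.subtype_mk
    apply continuous_pi
    intro i
    exact continuous_fst.add (continuous_finset_sum _ fun j _ =>
      continuous_of_discreteTopology.comp ((continuous_apply j).comp continuous_snd))
  · apply Continuous.prodMk
    · exact (continuous_apply (0 : Fin (n+1))).comp continuous_subtype_val
    · apply continuous_pi
      intro j
      set h : {v : Fin (n + 1) → ℝ //
          ∀ i j, ((v i : ℝ) : AddCircle (1 : ℝ)) = ((v j : ℝ) : AddCircle (1 : ℝ))} → ℝ :=
        fun v => v.1 j.succ - v.1 j.castSucc with hh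
      have hcont : Continuous h :=
        ((continuous_apply j.succ).comp continuous_subtype_val).sub
          ((continuous_apply j.castSucc).comp continuous_subtype_val)
      have : IsLocallyConstant fun v => (G v).2 j := by
        intro s
        have hset : (fun v => (G v).2 j) ⁻¹' s =
            h ⁻¹' (⋃ k ∈ s, Set.Ioo ((k : ℝ) - 1) ((k : ℝ) + 1)) := by
          ext v
          simp only [Set.mem_preimage, Set.mem_iUnion, Set.mem_Ioo, exists_prop]
          constructor
          · intro hv
            refine ⟨(G v).2 j, hv, ?_, ?_⟩ <;>
              · have := hGspec v j
                show _ < _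
                simp only [hh]
                linarith
          · rintro ⟨k, hk, h1, h2⟩
            have hvk : h v = ((G v).2 j : ℝ) := (hGspec v j).symm
            rw [hvk] at h1 h2
            have : (G v).2 j = k := by
              have h1' : k - 1 < (G v).2 j := by exact_mod_cast h1
              have h2' : (G v).2 j < k + 1 := by exact_mod_cast h2
              omega
            show (G v).2 j ∈ s
            rw [this]; exact hk
        rw [hset]
        exact hcont.isOpen_preimage _ (isOpen_biUnion fun k _ => isOpen_Ioo)
      exact this.continuous
end

section
/- Let G be a group, g ∈ G, C_g its centralizer, and consider the direct product group C_g × ℝ (with ℝ additive). The element (g⁻¹, 1) is central in C_g × ℝ, so the subgroup N it generates is normal; let Λ_g := (C_g × ℝ)/N denote the quotient group, and let π : C_g × ℝ → Λ_g be the projection. Then for every natural number n, the map from C_g × ℝ × ℤ^n to (C_g × ℝ)^{n+1} sending (h, r, (m_1, …, m_n)) to the tuple whose i-th entry (0 ≤ i ≤ n) is (g^{−(m_1+⋯+m_i)} h, r + m_1 + ⋯ + m_i) is a bijection onto the (n+1)-fold fiber product of C_g × ℝ over Λ_g, i.e. onto the set of tuples (u_0, …, u_n) with π(u_i) = π(u_j)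 for all i, j. -/
/-- `g` as an element of its own centralizer. -/
def gcen {G : Type*} [Group G] (g : G) : Subgroup.centralizer ({g} : Set G) :=
  ⟨g, Subgroup.mem_centralizer_iff.mpr (by rintro m hm; rw [Set.mem_singleton_iff] at hm; rw [hm])⟩

/-- The element `(g⁻¹, 1)` of `C_g × ℝ` (with `ℝ` written multiplicatively). -/
def huanElt {G : Type*} [Group G] (g : G) :
    Subgroup.centralizer ({g} : Set G) × Multiplicative ℝ :=
  ((gcen g)⁻¹, Multiplicative.ofAdd (1 : ℝ))

theorem huanElt_mul_comm {G : Type*} [Group G] (g : G)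
    (y : Subgroup.centralizer ({g} : Set G) × Multiplicative ℝ) :
    huanElt g * y = y * huanElt g := by
  have h1 : Commute g (y.1 : G) :=
    Subgroup.mem_centralizer_iff.mp y.1.2 g (Set.mem_singleton g)
  have h2 : ((gcen g)⁻¹ : Subgroup.centralizer ({g} : Set G)) * y.1 = y.1 * (gcen g)⁻¹ := by
    have h3 := h1.inv_left
    exact Subtype.ext (by simpa [gcen] using h3.eq)
  exact Prod.ext h2 (mul_comm _ _)

/-- The subgroup generated by `(g⁻¹, 1)` is central, hence normal. -/
instance huanNormal {G : Type*} [Group G] (g : G) :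
    (Subgroup.zpowers (huanElt g)).Normal := by
  constructor
  intro x hx y
  obtain ⟨k, hk⟩ := Subgroup.mem_zpowers_iff.mp hx
  have hcomm : x * y = y * x := by
    rw [← hk]
    exact ((Commute.zpow_left (huanElt_mul_comm g y) k)).eq
  have : y * x * y⁻¹ = x := by
    rw [← hcomm, mul_assoc, mul_inv_cancel, mul_one]
  rwa [this]

/-- Huan's group `Λ_g = (C_g × ℝ)/⟨(g⁻¹, 1)⟩`. -/
abbrev HuanLambda {G : Type*} [Group G] (g : G) :=
  (Subgroup.centralizer ({g} : Set G) × Multiplicative ℝ) ⧸ Subgroup.zpowers (huanElt g)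


/- auxiliary lemmas -/
lemma huanElt_zpow {G : Type*} [Group G] (g : G) (k : ℤ) :
    huanElt g ^ k = (gcen g ^ (-k), Multiplicative.ofAdd (k : ℝ)) := by
  ext
  · simp [huanElt, zpow_neg, inv_zpow]
  · show Multiplicative.ofAdd (1:ℝ) ^ k = Multiplicative.ofAdd (k : ℝ)
    rw [← ofAdd_zsmul]; norm_num

lemma huanElt_zpow_comm {G : Type*} [Group G] (g : G) (k : ℤ)
    (y : Subgroup.centralizer ({g} : Set G) × Multiplicative ℝ) :
    huanElt g ^ k * y = y * huanElt g ^ k :=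
  (Commute.zpow_left (huanElt_mul_comm g y) k).eq

lemma huan_mk_zpow_mul {G : Type*} [Group G] (g : G) (k : ℤ)
    (y : Subgroup.centralizer ({g} : Set G) × Multiplicative ℝ) :
    (QuotientGroup.mk (huanElt g ^ k * y) : HuanLambda g) = QuotientGroup.mk y := by
  refine (QuotientGroup.eq).mpr ?_
  have : (huanElt g ^ k * y)⁻¹ * y = huanElt g ^ (-k) := by
    rw [mul_inv_rev, ← zpow_neg, mul_assoc, huanElt_zpow_comm, inv_mul_cancel_left]
  rw [this]
  exact Subgroup.zpow_mem _ (Subgroup.mem_zpowers _) _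

lemma sumsplit {M : Type*} [AddCommMonoid M] {n : ℕ} (f : Fin n → M) (i : Fin n) :
    ∑ j ∈ Finset.univ.filter (fun j : Fin n => (j : ℕ) < (i : ℕ) + 1), f j
      = (∑ j ∈ Finset.univ.filter (fun j : Fin n => (j : ℕ) < (i : ℕ)), f j) + f i := by
  have h : Finset.univ.filter (fun j : Fin n => (j : ℕ) < (i : ℕ) + 1)
      = insert i (Finset.univ.filter (fun j : Fin n => (j : ℕ) < (i : ℕ))) := by
    ext j
    simp [Nat.lt_succ_iff_lt_or_eq, Fin.ext_iff, or_comm]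
    exact le_iff_eq_or_lt.trans (or_congr_left Fin.ext_iff)
  rw [h, Finset.sum_insert (by simp), add_comm]


/-- The map `C_g × ℝ × ℤⁿ → (C_g × ℝ)^{n+1}` sending `(h, r, (m₁, …, mₙ))` to the
tuple whose `i`-th entry is `(g^{−(m₁+⋯+m_i)} h, r + m₁ + ⋯ + m_i)` is a bijection onto the
`(n+1)`-fold fiber product of `C_g × ℝ` over `Λ_g`, i.e. onto the set of tuples all of whose
entries have the same image under the projection `π : C_g × ℝ → Λ_g`.
(The additive real line is encoded multiplicatively as `Multiplicative ℝ` so that `C_g × ℝ`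
is a group.) -/
theorem huan_cechNerve (G : Type*) [Group G] (g : G) (n : ℕ) :
    Set.BijOn
      (fun x : (Subgroup.centralizer ({g} : Set G)) × ℝ × (Fin n → ℤ) =>
        fun i : Fin (n + 1) =>
          ((gcen g ^ (-(∑ j ∈ Finset.univ.filter (fun j : Fin n => (j : ℕ) < (i : ℕ)), x.2.2 j))
              * x.1,
            Multiplicative.ofAdd (x.2.1 +
              ∑ j ∈ Finset.univ.filter (fun j : Fin n => (j : ℕ) < (i : ℕ)), (x.2.2 j : ℝ))) :
            (Subgroup.centralizer ({g} : Set G)) × Multiplicative ℝ))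
      Set.univ
      {u : Fin (n + 1) → (Subgroup.centralizer ({g} : Set G)) × Multiplicative ℝ |
        ∀ i j, (QuotientGroup.mk (u i) : HuanLambda g) = QuotientGroup.mk (u j)} := by
  set C := Subgroup.centralizer ({g} : Set G)
  -- the key rewriting: entry i equals huanElt ^ S * (h, ofAdd r)
  have key : ∀ (h : C) (r : ℝ) (S : ℤ),
      huanElt g ^ S * ((h, Multiplicative.ofAdd r) : C × Multiplicative ℝ)
        = (gcen g ^ (-S) * h, Multiplicative.ofAdd (r + (S : ℝ))) := by
    intro h r S
    rw [huanElt_zpow]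
    ext
    · rfl
    · show Multiplicative.ofAdd (S:ℝ) * Multiplicative.ofAdd r = _
      rw [← ofAdd_add, add_comm]; rfl
  refine ⟨?_, ?_, ?_⟩
  · -- MapsTo
    rintro ⟨h, r, m⟩ -
    intro i j
    have e : ∀ i : Fin (n+1),
        ((gcen g ^ (-(∑ j ∈ Finset.univ.filter (fun j : Fin n => (j : ℕ) < (i : ℕ)), m j)) * h,
          Multiplicative.ofAdd (r +
            ∑ j ∈ Finset.univ.filter (fun j : Fin n => (j : ℕ) < (i : ℕ)), (m j : ℝ))) :
          C × Multiplicative ℝ)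
        = huanElt g ^ (∑ j ∈ Finset.univ.filter (fun j : Fin n => (j : ℕ) < (i : ℕ)), m j)
            * (h, Multiplicative.ofAdd r) := by
      intro i
      rw [key]
      push_cast
      rfl
    simp only [e]
    rw [huan_mk_zpow_mul, huan_mk_zpow_mul]
  · -- InjOn
    rintro ⟨h, r, m⟩ - ⟨h', r', m'⟩ - heq
    simp only at heq
    have h0 := congrFun heq 0
    have hfilt0 : Finset.univ.filter (fun j : Fin n => (j : ℕ) < ((0 : Fin (n+1)) : ℕ))
        = (∅ : Finset (Fin n)) := by
      ext j; simp
    rw [hfilt0] at h0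
    simp only [Finset.sum_empty, neg_zero, zpow_zero, one_mul, add_zero, Prod.mk.injEq] at h0
    obtain ⟨hh, hr⟩ := h0
    have hr' : r = r' := by
      have := Multiplicative.ofAdd.injective hr
      exact this
    -- real partial sums are equal
    have hsum : ∀ i : Fin (n+1),
        (∑ j ∈ Finset.univ.filter (fun j : Fin n => (j : ℕ) < (i : ℕ)), (m j : ℝ))
          = ∑ j ∈ Finset.univ.filter (fun j : Fin n => (j : ℕ) < (i : ℕ)), (m' j : ℝ) := by
      intro i
      have := congrFun heq i
      have h2 := congrArg Prod.snd this
      simp only at h2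
      have := Multiplicative.ofAdd.injective h2
      rw [hr'] at this
      linarith [this]
    have hm : m = m' := by
      funext j
      have h1 := hsum j.succ
      have h2 := hsum j.castSucc
      simp only [Fin.val_succ, Fin.coe_castSucc] at h1 h2
      rw [sumsplit, sumsplit] at h1
      rw [h2] at h1
      have : (m j : ℝ) = (m' j : ℝ) := by linarith
      exact_mod_cast this
    rw [hh, hr', hm]
  · -- SurjOn
    rintro u hu
    simp only [Set.mem_setOf_eq] at hu
    have step : ∀ j : Fin n, ∃ k : ℤ, u j.succ = huanElt g ^ k * u j.castSucc := by
      intro j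
      have := (QuotientGroup.eq).mp (hu j.castSucc j.succ)
      obtain ⟨k, hk⟩ := this
      refine ⟨k, ?_⟩
      have : u j.castSucc * ((u j.castSucc)⁻¹ * u j.succ) = u j.succ := by group
      rw [← this, ← hk, ← huanElt_zpow_comm]
    choose m hm using step
    have claim : ∀ i : Fin (n+1),
        u i = huanElt g ^ (∑ j ∈ Finset.univ.filter (fun j : Fin n => (j : ℕ) < (i : ℕ)), m j)
              * u 0 := by
      intro i
      induction i using Fin.induction with
      | zero =>
        have : Finset.univ.filter (fun j : Fin n => (j : ℕ) < ((0 : Fin (n+1)) : ℕ))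
            = (∅ : Finset (Fin n)) := by ext j; simp
        rw [this]
        simp
      | succ i ih =>
        rw [hm i, ih]
        rw [← mul_assoc, ← zpow_add]
        congr 1
        simp only [Fin.val_succ, Fin.coe_castSucc]
        rw [sumsplit]
        ring_nf
    refine ⟨((u 0).1, Multiplicative.toAdd (u 0).2, m), Set.mem_univ _, ?_⟩
    funext i
    simp only
    have hu0 : ((((u 0).1 : C), Multiplicative.ofAdd (Multiplicative.toAdd (u 0).2))
        : C × Multiplicative ℝ) = u 0 := by
      ext <;> simp
    calc ((gcen g ^ (-(∑ j ∈ Finset.univ.filter (fun j : Fin n => (j : ℕ) < (i : ℕ)), m j))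
              * (u 0).1,
          Multiplicative.ofAdd (Multiplicative.toAdd (u 0).2 +
            ∑ j ∈ Finset.univ.filter (fun j : Fin n => (j : ℕ) < (i : ℕ)), (m j : ℝ))) :
          C × Multiplicative ℝ)
        = huanElt g ^ (∑ j ∈ Finset.univ.filter (fun j : Fin n => (j : ℕ) < (i : ℕ)), m j)
            * ((u 0).1, Multiplicative.ofAdd (Multiplicative.toAdd (u 0).2)) := by
          rw [key]; push_cast; rfl
      _ = u i := by rw [hu0, ← claim]
end

section
/- Let G be a group, g ∈ G, C_g its centralizer, and Λ_g := (C_g × ℝ)/⟨(g⁻¹, 1)⟩ the quotient of the direct product group C_g × ℝ (ℝ additive) by the central subgroup generated by (g⁻¹, 1). Then: (i) the map C_g → Λ_g sending h to the class of (h, 0) is an injective group homomorphism; (ii) the second projection (h, r) ↦ r descends to a surjective group homomorphism Λ_g → ℝ/ℤ onto the additive circle; and (iii) the kernel of the homomorphism in (ii) equals the image of the homomorphism in (i). In other words, there is a short exact sequence of groups 1 → C_g → Λ_g → ℝ/ℤ → 1. -/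
/-- There is a short exact sequence `1 → C_g → Λ_g → ℝ/ℤ → 1`:
(i) `h ↦ [(h, 0)]` is an injective group homomorphism `C_g → Λ_g`;
(ii) the second projection descends to a surjective group homomorphism `Λ_g → ℝ/ℤ`;
(iii) the kernel of the latter equals the range of the former.
(The additive groups `ℝ` and `ℝ/ℤ` are encoded multiplicatively via `Multiplicative`.) -/
theorem huan_ses (G : Type*) [Group G] (g : G) :
    ∃ (ι : Subgroup.centralizer ({g} : Set G) →* HuanLambda g)
      (ρ : HuanLambda g →* Multiplicative (AddCircle (1 : ℝ))),
      Function.Injective ι ∧ Function.Surjective ρ ∧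
      (∀ h, ι h = QuotientGroup.mk (h, Multiplicative.ofAdd (0 : ℝ))) ∧
      (∀ (h : Subgroup.centralizer ({g} : Set G)) (r : ℝ),
        ρ (QuotientGroup.mk (h, Multiplicative.ofAdd r)) =
          Multiplicative.ofAdd ((r : AddCircle (1 : ℝ)))) ∧
      ι.range = ρ.ker := by
  classical
  set C := Subgroup.centralizer ({g} : Set G) with hC
  let ι : C →* HuanLambda g := (QuotientGroup.mk' _).comp (MonoidHom.inl _ _)
  let q : Multiplicative ℝ →* Multiplicative (AddCircle (1 : ℝ)) :=
    AddMonoidHom.toMultiplicative (QuotientAddGroup.mk' (AddSubgroup.zmultiples (1 : ℝ)))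
  let f : (C × Multiplicative ℝ) →* Multiplicative (AddCircle (1 : ℝ)) :=
    q.comp (MonoidHom.snd _ _)
  have hf1 : f (huanElt g) = 1 := by
    show Multiplicative.ofAdd (((1 : ℝ) : AddCircle (1 : ℝ))) = 1
    rw [AddCircle.coe_period]; rfl
  have hf : ∀ x ∈ Subgroup.zpowers (huanElt g), f x = 1 := by
    intro x hx
    obtain ⟨k, hk⟩ := Subgroup.mem_zpowers_iff.mp hx
    rw [← hk, map_zpow, hf1, one_zpow]
  let ρ : HuanLambda g →* Multiplicative (AddCircle (1 : ℝ)) :=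
    QuotientGroup.lift _ f hf
  have hι : ∀ h : C, ι h = QuotientGroup.mk (h, Multiplicative.ofAdd (0 : ℝ)) :=
    fun h => rfl
  have hρ : ∀ (h : C) (r : ℝ),
      ρ (QuotientGroup.mk (h, Multiplicative.ofAdd r)) =
        Multiplicative.ofAdd ((r : AddCircle (1 : ℝ))) := fun h r => rfl
  refine ⟨ι, ρ, ?_, ?_, hι, hρ, ?_⟩
  · -- injectivity
    rw [injective_iff_map_eq_one]
    intro h hh
    have hmem : ((h, (1 : Multiplicative ℝ)) : C × Multiplicative ℝ)
        ∈ Subgroup.zpowers (huanElt g) := (QuotientGroup.eq_one_iff _).mp hh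
    obtain ⟨k, hk⟩ := Subgroup.mem_zpowers_iff.mp hmem
    have hk2 : (k : ℝ) = 0 := by
      have := congrArg (fun x => Multiplicative.toAdd x.2) hk
      simpa [huanElt] using this
    have hk0 : k = 0 := by exact_mod_cast hk2
    subst hk0
    have := congrArg Prod.fst hk
    simpa using this.symm
  · -- surjectivity
    intro x
    obtain ⟨r, hr⟩ := QuotientAddGroup.mk_surjective (Multiplicative.toAdd x)
    refine ⟨QuotientGroup.mk ((1 : C), Multiplicative.ofAdd r), ?_⟩
    rw [hρ 1 r]
    apply Multiplicative.toAdd.injective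
    simpa using hr
  · -- range = ker
    ext x
    constructor
    · rintro ⟨h, rfl⟩
      show ρ (ι h) = 1
      rw [hι h, hρ h 0]
      simp
    · intro hx
      induction x using QuotientGroup.induction_on with
      | H z =>
        obtain ⟨h, t⟩ := z
        have hx' : ρ (QuotientGroup.mk (h, t)) = 1 := hx
        rw [show t = Multiplicative.ofAdd (Multiplicative.toAdd t) from rfl,
          hρ h (Multiplicative.toAdd t)] at hx'
        have h0 : ((Multiplicative.toAdd t : ℝ) : AddCircle (1 : ℝ)) = 0 := by
          have := congrArg Multiplicative.toAdd hx'
          simpa using this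
        obtain ⟨n, hn⟩ := AddCircle.coe_eq_zero_iff (1 : ℝ) |>.mp h0
        refine ⟨h * (gcen g) ^ n, ?_⟩
        rw [hι]
        refine (QuotientGroup.eq (s := Subgroup.zpowers (huanElt g))).mpr ?_
        refine ⟨n, ?_⟩
        refine Prod.ext ?_ ?_
        · simp [huanElt, mul_assoc]
        · apply Multiplicative.toAdd.injective
          have hn' : (n : ℝ) = Multiplicative.toAdd t := by simpa using hn
          simp [huanElt, hn']
end

section
/- Let G be a group acting on a set X. The projection functor from the action groupoid X ⫽ G to the one-object groupoid B G (sending every object to the unique object and the morphism x → g·x to g) induces on nerves a morphism of simplicial sets N(X ⫽ G) → N(B G) which is a Kan fibration: it has the right lifting property with respect to every horn inclusion Λ[n, i] ↪ Δ[n] for all n ≥ 1 and 0 ≤ i ≤ n. Moreover, its fiber over the unique vertex of N(B G) (i.e. the pullback along Δ[0] → N(B G)) is isomorphic to the constant (discrete) simplicial set on the set X. -/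
open CategoryTheory Simplicial

universe u

/-- The morphism of nerves induced by a functor (from a category with objects in `Type u` to
one with objects in `Type 0`, both with hom-types in `Type u`); it sends a simplex, i.e. a
sequence of composable arrows, to its image sequence. -/
def nerveMap {C : Type u} [Category.{u} C] {D : Type} [Category.{u} D] (F : C ⥤ D) :
    nerve C ⟶ nerve D where
  app _ := TypeCat.ofHom fun x => x ⋙ F
  naturality _ _ _ := rfl


namespace NerveActionAux

lemma singleObj_eqToHom {M : Type*} [Monoid M] {x y : SingleObj M} (h : x = y) :
    eqToHom h = (1 : M) := by subst h; rfl

lemma singleObj_obj_eq {M : Type*} [Monoid M] (a b : SingleObj M) : a = b := by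
  cases a; cases b; rfl

lemma functor_to_singleObj_ext {C : Type*} [Category C] {M : Type*} [Monoid M]
    (F₁ F₂ : C ⥤ SingleObj M)
    (h : ∀ {x y : C} (f : x ⟶ y), (F₁.map f : M) = (F₂.map f : M)) : F₁ = F₂ := by
  refine CategoryTheory.Functor.ext (fun x => singleObj_obj_eq _ _) ?_
  intro x y f
  rw [SingleObj.comp_as_mul, SingleObj.comp_as_mul, singleObj_eqToHom, one_mul, mul_one]
  exact h f

variable {G : Type u} [Group G] {X : Type u} [MulAction G X]

lemma back_injective : Function.Injective (ActionCategory.back (M := G) (X := X)) := by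
  intro p q h
  rw [← ActionCategory.back_coe p, ← ActionCategory.back_coe q, h]

lemma map_smul {k : ℕ} (A : Fin (k+1) ⥤ ActionCategory G X) {u v : Fin (k+1)} (f : u ⟶ v) :
    (A.map f).val • (A.obj u).back = (A.obj v).back :=
  (A.map f).property

lemma eqToHom_val {p q : ActionCategory G X} (h : p = q) :
    (eqToHom h).val = (1 : G) := by subst h; rfl

lemma map_val_of_comp_π_eq {k : ℕ} {A : Fin (k+1) ⥤ ActionCategory G X}
    {T : Fin (k+1) ⥤ SingleObj G}
    (h : A ⋙ ActionCategory.π G X = T) {u v : Fin (k+1)} (f : u ⟶ v) :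
    (A.map f).val = (T.map f : G) := by
  have := Functor.congr_hom h f
  rw [SingleObj.comp_as_mul, SingleObj.comp_as_mul, singleObj_eqToHom, one_mul, mul_one] at this
  exact this

/-- Rigidity: two functors `Fin (k+1) ⥤ X ⫽ G` with the same projection to `B G` which agree
at one object are equal. -/
lemma functor_ext_of_proj {k : ℕ} {A B : Fin (k+1) ⥤ ActionCategory G X}
    {T : Fin (k+1) ⥤ SingleObj G}
    (hA : A ⋙ ActionCategory.π G X = T) (hB : B ⋙ ActionCategory.π G X = T)
    (t : Fin (k+1)) (ht : A.obj t = B.obj t) : A = B := by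
  have hval : ∀ {u v : Fin (k+1)} (f : u ⟶ v), (A.map f).val = (B.map f).val := fun f =>
    (map_val_of_comp_π_eq hA f).trans (map_val_of_comp_π_eq hB f).symm
  have hobj : ∀ u, A.obj u = B.obj u := by
    intro u
    apply back_injective
    rcases le_total t u with h | h
    · have ha := map_smul A (homOfLE h)
      have hb := map_smul B (homOfLE h)
      rw [← ha, ← hb, hval, ht]
    · have ha := map_smul A (homOfLE h)
      have hb := map_smul B (homOfLE h)
      rw [hval] at ha
      have h2 : (B.map (homOfLE h)).val • (A.obj u).back
          = (B.map (homOfLE h)).val • (B.obj u).back := by rw [ha, hb, ht]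
      exact smul_left_cancel _ h2
  refine CategoryTheory.Functor.ext hobj ?_
  intro u v f
  apply Subtype.ext
  rw [hval]
  show (B.map f).val = (eqToHom (hobj u) ≫ B.map f ≫ eqToHom (hobj v).symm).val
  rw [ActionCategory.comp_val, ActionCategory.comp_val, eqToHom_val, eqToHom_val,
    one_mul, mul_one]

/-- The lift of a functor `Fin (k+1) ⥤ B G` to the action groupoid, with value at `0`
the object corresponding to `x : X`. -/
def liftFun {k : ℕ} (T : Fin (k+1) ⥤ SingleObj G) (x : X) :
    Fin (k+1) ⥤ ActionCategory G X where
  obj u := ActionCategory.objEquiv G X ((T.map (homOfLE u.zero_le) : G) • x)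
  map {u v} f := ⟨(T.map f : G), by
    show (T.map f : G) • ((T.map (homOfLE u.zero_le) : G) • x) = _
    rw [smul_smul, ← SingleObj.comp_as_mul, ← T.map_comp]
    congr 1⟩
  map_id u := by
    apply Subtype.ext
    show (T.map (𝟙 u) : G) = _
    rw [T.map_id]
    rfl
  map_comp {u v w} f g := by
    apply Subtype.ext
    show (T.map (f ≫ g) : G) = _
    rw [T.map_comp, SingleObj.comp_as_mul]
    rfl

lemma liftFun_comp_π {k : ℕ} (T : Fin (k+1) ⥤ SingleObj G) (x : X) :
    liftFun T x ⋙ ActionCategory.π G X = T :=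
  functor_to_singleObj_ext _ _ (fun _ => rfl)

lemma liftFun_obj {k : ℕ} (T : Fin (k+1) ⥤ SingleObj G) (x : X) (u : Fin (k+1)) :
    (liftFun T x).obj u = ActionCategory.objEquiv G X ((T.map (homOfLE u.zero_le) : G) • x) :=
  rfl

lemma fin1_map_one {M : Type*} [Monoid M] (t : Fin 1 ⥤ SingleObj M) {a b : Fin 1}
    (g : a ⟶ b) : (t.map g : M) = 1 := by
  obtain rfl : a = b := Subsingleton.elim a b
  have : g = 𝟙 a := rfl
  rw [this, t.map_id]
  rfl

lemma back_const {k : ℕ} (A : Fin (k+1) ⥤ ActionCategory G X)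
    (h1 : ∀ {u v : Fin (k+1)} (f : u ⟶ v), (A.map f).val = 1) (u v : Fin (k+1)) :
    (A.obj u).back = (A.obj v).back := by
  rcases le_total u v with h | h
  · have := map_smul A (homOfLE h)
    rw [h1, one_smul] at this
    exact this
  · have := map_smul A (homOfLE h)
    rw [h1, one_smul] at this
    exact this.symm

end NerveActionAux


/-- For a group `G` acting on a set `X`, the map of nerves
`N(X ⫽ G) → N(B G)` induced by the projection functor `ActionCategory.π` from the action
groupoid to the one-object groupoid is a Kan fibration: it has the right lifting property
with respect to every horn inclusion `Λ[n, i] ↪ Δ[n]` for all `n ≥ 1` and `0 ≤ i ≤ n`.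
Moreover, its fiber over the unique vertex of `N(B G)` — the pullback along any map
`Δ[0] ⟶ N(B G)` — is isomorphic to the constant (discrete) simplicial set on `X`. -/
theorem nerve_actionCategory_kanFibration (G : Type u) [Group G] (X : Type u) [MulAction G X] :
    (∀ (n : ℕ), 1 ≤ n → ∀ (i : Fin (n + 1)),
      HasLiftingProperty (SSet.horn n i).ι (nerveMap (ActionCategory.π G X))) ∧
    ∀ v : Δ[0] ⟶ nerve (SingleObj G),
      Nonempty (Limits.pullback v (nerveMap (ActionCategory.π G X)) ≅
        (Functor.const SimplexCategoryᵒᵖ).obj X) := by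
  constructor
  · intro n hn i
    obtain ⟨m, rfl⟩ : ∃ m, n = m + 1 := ⟨n - 1, by omega⟩
    constructor
    intro top bottom sq
    -- the bottom simplex, as a functor `Fin (m+2) ⥤ B G`
    let F : ComposableArrows (SingleObj G) (m+1) := SSet.yonedaEquiv bottom
    -- the vertex `i` of the horn
    have hvtx : Set.range (SSet.stdSimplex.asOrderHom (SSet.stdSimplex.const (m+1) i
        (Opposite.op ⦋0⦌))) ∪ {i} ≠ Set.univ := by
      intro h
      obtain ⟨j, hj⟩ := exists_ne i
      have hm : j ∈ Set.range (SSet.stdSimplex.asOrderHom (SSet.stdSimplex.const (m+1) i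
          (Opposite.op ⦋0⦌))) ∪ {i} := h ▸ Set.mem_univ j
      rcases hm with hm | hm
      · obtain ⟨a, ha⟩ := hm
        exact hj ha.symm
      · exact hj hm
    let vtx : Λ[m+1, i] _⦋0⦌ := ⟨SSet.stdSimplex.const (m+1) i (Opposite.op ⦋0⦌), hvtx⟩
    -- the value of the horn at the vertex `i`
    let Vobj : ActionCategory G X := (top.app (Opposite.op ⦋0⦌) vtx).obj 0
    let x₀ : X := (F.map (homOfLE (Fin.zero_le i)) : G)⁻¹ • Vobj.back
    let σ : ComposableArrows (ActionCategory G X) (m+1) := NerveActionAux.liftFun F x₀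
    have hσi : σ.obj i = Vobj := by
      show ActionCategory.objEquiv G X ((F.map (homOfLE (Fin.zero_le i)) : G) • x₀) = Vobj
      show ActionCategory.objEquiv G X ((F.map (homOfLE (Fin.zero_le i)) : G) •
        (F.map (homOfLE (Fin.zero_le i)) : G)⁻¹ • Vobj.back) = Vobj
      rw [smul_inv_smul]
      exact (ActionCategory.objEquiv G X).apply_symm_apply Vobj
    let l : Δ[m+1] ⟶ nerve (ActionCategory G X) := SSet.yonedaEquiv.symm σ
    refine CommSq.HasLift.mk' ⟨l, ?_, ?_⟩
    · -- fac_left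
      apply SSet.horn.hom_ext
      intro j hj
      set τ : ComposableArrows (ActionCategory G X) m :=
        top.app (Opposite.op ⦋m⦌) (SSet.horn.face i j hj) with hτ
      show (nerve (ActionCategory G X)).map (SimplexCategory.δ j).op σ = τ
      show (SimplexCategory.toCat.map (SimplexCategory.δ j)).toFunctor ⋙ σ = τ
      obtain ⟨k, hk⟩ := Fin.exists_succAbove_eq (Ne.symm hj)
      have hA : ((SimplexCategory.toCat.map (SimplexCategory.δ j)).toFunctor ⋙ σ) ⋙
          ActionCategory.π G X = (SimplexCategory.toCat.map (SimplexCategory.δ j)).toFunctor ⋙ F := by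
        exact congrArg (fun T => (SimplexCategory.toCat.map (SimplexCategory.δ j)).toFunctor ⋙ T)
          (NerveActionAux.liftFun_comp_π F x₀)
      have hB : τ ⋙ ActionCategory.π G X
          = (SimplexCategory.toCat.map (SimplexCategory.δ j)).toFunctor ⋙ F := by
        have h2 := ConcreteCategory.congr_hom (NatTrans.congr_app sq.w (Opposite.op ⦋m⦌))
          (SSet.horn.face i j hj)
        have h3 := ConcreteCategory.congr_hom (bottom.naturality (SimplexCategory.δ j).op)
          (SSet.stdSimplex.objEquiv.symm (𝟙 (⦋m+1⦌ : SimplexCategory)))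
        have h4 : Δ[m+1].map (SimplexCategory.δ j).op
            (SSet.stdSimplex.objEquiv.symm (𝟙 (⦋m+1⦌ : SimplexCategory)))
            = SSet.stdSimplex.objEquiv.symm (SimplexCategory.δ j) := by
          show SSet.stdSimplex.objEquiv.symm (SimplexCategory.δ j ≫ 𝟙 (⦋m+1⦌ : SimplexCategory)) = _
          rw [Category.comp_id]
        simp only [types_comp_apply] at h3
        rw [h4] at h3
        exact h2.trans h3
      refine NerveActionAux.functor_ext_of_proj hA hB k ?_
      -- object comparison at position k
      have hobjk : (SimplexCategory.toCat.map (SimplexCategory.δ j)).toFunctor.obj k = i := hk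
      show σ.obj ((SimplexCategory.toCat.map (SimplexCategory.δ j)).toFunctor.obj k) = τ.obj k
      rw [hobjk, hσi]
      -- now show `Vobj = τ.obj k`
      have hnat := ConcreteCategory.congr_hom (top.naturality (SimplexCategory.const ⦋0⦌ ⦋m⦌ k).op)
        (SSet.horn.face i j hj)
      have hface : (Λ[m+1, i] : SSet.{u}).map (SimplexCategory.const ⦋0⦌ ⦋m⦌ k).op
          (SSet.horn.face i j hj) = vtx := by
        apply Subtype.ext
        show SSet.stdSimplex.objEquiv.symm (SimplexCategory.const ⦋0⦌ ⦋m⦌ k ≫ SimplexCategory.δ j)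
          = SSet.stdSimplex.const (m+1) i (Opposite.op ⦋0⦌)
        congr 1
        apply SimplexCategory.Hom.ext
        apply OrderHom.ext
        funext a
        show j.succAbove k = i
        exact hk
      simp only [types_comp_apply] at hnat
      rw [hface] at hnat
      exact congrArg (fun A => A.obj 0) hnat
    · -- fac_right
      apply (SSet.yonedaEquiv (X := nerve (SingleObj G)) (n := ⦋m+1⦌)).injective
      show (l ≫ nerveMap (ActionCategory.π G X)).app (Opposite.op ⦋m+1⦌)
        (SSet.stdSimplex.objEquiv.symm (𝟙 (⦋m+1⦌ : SimplexCategory))) = F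
      show ((nerve (ActionCategory G X)).map (𝟙 (⦋m+1⦌ : SimplexCategory)).op σ) ⋙
        ActionCategory.π G X = F
      have : (nerve (ActionCategory G X)).map (𝟙 (⦋m+1⦌ : SimplexCategory)).op σ = σ := by
        rw [CategoryTheory.op_id]
        exact ConcreteCategory.congr_hom ((nerve (ActionCategory G X)).map_id (Opposite.op ⦋m+1⦌)) σ
      rw [this]
      exact NerveActionAux.liftFun_comp_π F x₀
  · intro v
    have hΔ0 : ∀ (mm : SimplexCategoryᵒᵖ) (a b : Δ[0].obj mm), a = b := by
      intro mm a b
      apply (SSet.stdSimplex.objEquiv).injective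
      apply SimplexCategory.Hom.ext
      apply OrderHom.ext
      funext x
      exact @Subsingleton.elim (Fin 1) _ _ _
    have hv1 : ∀ (mm : SimplexCategoryᵒᵖ) (u : Δ[0].obj mm) {a b} (f : a ⟶ b),
        ((v.app mm u).map f : G) = 1 := by
      intro mm u a b f
      obtain ⟨mq⟩ := mm
      have hnat := ConcreteCategory.congr_hom (v.naturality (SimplexCategory.const mq ⦋0⦌ 0).op)
        (SSet.stdSimplex.objEquiv.symm (𝟙 (⦋0⦌ : SimplexCategory)))
      simp only [types_comp_apply] at hnat
      have hu : Δ[0].map (SimplexCategory.const mq ⦋0⦌ 0).op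
          (SSet.stdSimplex.objEquiv.symm (𝟙 (⦋0⦌ : SimplexCategory))) = u := hΔ0 _ _ _
      rw [hu] at hnat
      rw [hnat]
      exact NerveActionAux.fin1_map_one _ _
    let cX : SSet.{u} := (Functor.const SimplexCategoryᵒᵖ).obj X
    let fst : cX ⟶ Δ[0] :=
      { app := fun mm => TypeCat.ofHom fun _ => (SSet.stdSimplex.objEquiv).symm
          (SimplexCategory.const mm.unop ⦋0⦌ 0)
        naturality := by intro mm mm' f; ext x; exact hΔ0 _ _ _ }
    let snd : cX ⟶ nerve (ActionCategory G X) :=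
      { app := fun mm => TypeCat.ofHom fun x => (Functor.const _).obj (ActionCategory.objEquiv G X x)
        naturality := by intro mm mm' f; ext x; rfl }
    have comm : fst ≫ v = snd ≫ nerveMap (ActionCategory.π G X) := by
      apply NatTrans.ext
      funext mm
      ext x
      show v.app mm (fst.app mm x) = (snd.app mm x) ⋙ ActionCategory.π G X
      apply NerveActionAux.functor_to_singleObj_ext
      intro a b f
      exact (hv1 mm (fst.app mm x) f).trans rfl
    have hsnest : ∀ (s : Limits.PullbackCone v (nerveMap (ActionCategory.π G X)))
        (mm : SimplexCategoryᵒᵖ) (w : s.pt.obj mm) {a b : Fin (mm.unop.len + 1)} (f : a ⟶ b),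
        ((s.snd.app mm w).map f).val = (1:G) := by
      intro s mm w a b f
      have hc := ConcreteCategory.congr_hom (NatTrans.congr_app s.condition mm) w
      simp only [FunctorToTypes.comp] at hc
      have hc2 : (s.snd.app mm w) ⋙ ActionCategory.π G X
          = v.app mm (s.fst.app mm w) := hc.symm
      exact (NerveActionAux.map_val_of_comp_π_eq hc2 f).trans (hv1 mm (s.fst.app mm w) f)
    have islim := Limits.PullbackCone.IsLimit.mk comm
      (fun s =>
        { app := fun mm => TypeCat.ofHom fun w => ((s.snd.app mm w).obj 0).back
          naturality := by
            intro mm mm' f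
            ext w
            have hn := ConcreteCategory.congr_hom (s.snd.naturality f) w
            simp only [types_comp_apply] at hn
            show ((s.snd.app mm' (s.pt.map f w)).obj 0).back = _
            rw [hn]
            exact NerveActionAux.back_const _ (fun {a b} g => hsnest s mm w g) _ _ })
      (fun s => by
        apply NatTrans.ext
        funext mm
        ext w
        exact hΔ0 _ _ _)
      (fun s => by
        apply NatTrans.ext
        funext mm
        ext w
        show (Functor.const _).obj
            (ActionCategory.objEquiv G X (((s.snd.app mm w).obj 0).back)) = s.snd.app mm w
        refine NerveActionAux.functor_ext_of_proj (T := s.snd.app mm w ⋙ ActionCategory.π G X) ?_ rfl 0 ?_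
        · apply NerveActionAux.functor_to_singleObj_ext
          intro a b f
          exact (hsnest s mm w f).symm
        · exact (ActionCategory.objEquiv G X).apply_symm_apply _)
      (fun s mo h1 h2 => by
        apply NatTrans.ext
        funext mm
        ext w
        have hmo := ConcreteCategory.congr_hom (NatTrans.congr_app h2 mm) w
        simp only [FunctorToTypes.comp] at hmo
        exact congrArg (fun (A : ComposableArrows (ActionCategory G X) (mm.unop.len)) =>
          (A.obj 0).back) hmo)
    exact ⟨Limits.IsLimit.conePointUniqueUpToIso
      (Limits.pullbackIsPullback v (nerveMap (ActionCategory.π G X))) islim⟩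
end

section
/- Let p, q be natural numbers. A (p+q)-simplex of the product simplicial set Δ[p] × Δ[q] is given by a pair (f, g) of monotone maps f : Fin(p+q+1) → Fin(p+1) and g : Fin(p+q+1) → Fin(q+1). Such a simplex is nondegenerate (i.e. not in the image of any degeneracy operator of Δ[p] × Δ[q]) if and only if the map i ↦ (f(i), g(i)) is injective, and this holds if and only if for every 0 ≤ k < p+q exactly one of the following occurs: f(k+1) = f(k) + 1 and g(k+1) = g(k), or g(k+1) = g(k) + 1 and f(k+1) = f(k). -/
private lemma step_lower {n : ℕ} (h : Fin (n + 1) → ℕ)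
    (hs : ∀ k : Fin n, h k.castSucc + 1 ≤ h k.succ) : ∀ i : Fin (n + 1), (i : ℕ) ≤ h i := by
  intro i
  induction i using Fin.induction with
  | zero => simp
  | succ k ih =>
    have := hs k
    simp only [Fin.coe_castSucc] at ih
    simp only [Fin.val_succ]
    omega

private lemma step_upper {n : ℕ} (h : Fin (n + 1) → ℕ)
    (hs : ∀ k : Fin n, h k.castSucc + 1 ≤ h k.succ) :
    ∀ i : Fin (n + 1), h i + (n - (i : ℕ)) ≤ h (Fin.last n) := by
  intro i
  induction i using Fin.reverseInduction with
  | last => simp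
  | cast k ih =>
    have := hs k
    have hk := k.isLt
    simp only [Fin.val_succ] at ih
    simp only [Fin.coe_castSucc]
    omega

/-- A `(p+q)`-simplex of `Δ[p] × Δ[q]`, given by a pair `(f, g)` of monotone
maps `f : Fin (p+q+1) →o Fin (p+1)` and `g : Fin (p+q+1) →o Fin (q+1)`, is nondegenerate
(i.e. does not factor through any degeneracy `σ_k = Fin.predAbove k`, componentwise with the
same `k`) if and only if the map `i ↦ (f i, g i)` is injective; and the latter holds if and
only if at every step `k` exactly one of the following occurs: `f` increases by exactly one
while `g` is constant, or `g` increases by exactly one while `f` is constant. -/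
theorem nondegenerate_prod_simplex_iff (p q : ℕ)
    (f : Fin (p + q + 1) →o Fin (p + 1)) (g : Fin (p + q + 1) →o Fin (q + 1)) :
    ((¬ ∃ (k : Fin (p + q)) (f' : Fin (p + q) →o Fin (p + 1)) (g' : Fin (p + q) →o Fin (q + 1)),
        (∀ i, f i = f' (k.predAbove i)) ∧ (∀ i, g i = g' (k.predAbove i))) ↔
      Function.Injective (fun i => (f i, g i))) ∧
    (Function.Injective (fun i => (f i, g i)) ↔
      ∀ k : Fin (p + q),
        Xor' (((f k.succ : ℕ) = (f k.castSucc : ℕ) + 1) ∧ g k.succ = g k.castSucc)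
             (((g k.succ : ℕ) = (g k.castSucc : ℕ) + 1) ∧ f k.succ = f k.castSucc)) := by
  constructor
  · constructor
    · -- nondegenerate → injective
      intro hnd
      by_contra hinj
      apply hnd
      -- get i < j with equal pairs
      simp only [Function.Injective, not_forall] at hinj
      obtain ⟨i0, j0, hij0, hne0⟩ := hinj
      simp only [Prod.mk.injEq] at hij0
      obtain ⟨i, j, hlt, hfij, hgij⟩ :
          ∃ i j : Fin (p + q + 1), i < j ∧ f i = f j ∧ g i = g j := by
        rcases Ne.lt_or_gt (fun h => hne0 h) with h | h
        · exact ⟨i0, j0, h, hij0.1, hij0.2⟩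
        · exact ⟨j0, i0, h, hij0.1.symm, hij0.2.symm⟩
      have hival : (i : ℕ) < p + q := by
        have := j.isLt; have := hlt; omega
      set k : Fin (p + q) := ⟨(i : ℕ), hival⟩ with hk
      have hkc : k.castSucc = i := rfl
      have hksle : k.succ ≤ j := by
        simp only [Fin.le_def, Fin.val_succ]
        exact hlt
      have hfk : f k.succ = f k.castSucc := by
        refine le_antisymm ?_ (f.monotone (Fin.castSucc_le_succ k))
        rw [hkc, hfij]
        exact f.monotone hksle
      have hgk : g k.succ = g k.castSucc := by
        refine le_antisymm ?_ (g.monotone (Fin.castSucc_le_succ k))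
        rw [hkc, hgij]
        exact g.monotone hksle
      refine ⟨k, f.comp ⟨(k.castSucc).succAbove, (Fin.strictMono_succAbove _).monotone⟩,
        g.comp ⟨(k.castSucc).succAbove, (Fin.strictMono_succAbove _).monotone⟩, ?_, ?_⟩ <;>
        intro x <;>
        simp only [OrderHom.comp_coe, OrderHom.coe_mk, Function.comp_apply] <;>
        rcases eq_or_ne x k.castSucc with hx | hx
      · rw [hx, Fin.predAbove_castSucc_self, Fin.succAbove_castSucc_self, hfk]
      · rw [Fin.succAbove_predAbove hx]
      · rw [hx, Fin.predAbove_castSucc_self, Fin.succAbove_castSucc_self, hgk]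
      · rw [Fin.succAbove_predAbove hx]
    · -- injective → nondegenerate
      intro hinj ⟨k, f', g', hf, hg⟩
      have h1 : (fun i => (f i, g i)) k.castSucc = (fun i => (f i, g i)) k.succ := by
        simp only [hf, hg, Fin.predAbove_castSucc_self, Fin.predAbove_succ_self]
      have := hinj h1
      exact absurd this (Fin.castSucc_lt_succ : k.castSucc < k.succ).ne
  · constructor
    · -- injective → step condition
      intro hinj k
      -- h i := f i + g i
      have hs : ∀ m : Fin (p + q), (f m.castSucc : ℕ) + (g m.castSucc : ℕ) + 1
          ≤ (f m.succ : ℕ) + (g m.succ : ℕ) := by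
        intro m
        have hf := f.monotone (Fin.castSucc_le_succ m)
        have hg := g.monotone (Fin.castSucc_le_succ m)
        have hne : ¬ ((f m.castSucc : ℕ) = f m.succ ∧ (g m.castSucc : ℕ) = g m.succ) := by
          rintro ⟨h1, h2⟩
          have heq : (fun i => (f i, g i)) m.castSucc = (fun i => (f i, g i)) m.succ := by
            simp only [Prod.mk.injEq]
            exact ⟨Fin.ext h1, Fin.ext h2⟩
          exact (Fin.castSucc_lt_succ : m.castSucc < m.succ).ne (hinj heq)
        rw [Fin.le_def] at hf hg
        omega
      have hlow := step_lower (fun i => (f i : ℕ) + (g i : ℕ)) hs k.castSucc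
      have hup := step_upper (fun i => (f i : ℕ) + (g i : ℕ)) hs k.succ
      have hstep := hs k
      have hflast : (f (Fin.last (p + q)) : ℕ) ≤ p := Nat.lt_succ_iff.mp (f _).isLt
      have hglast : (g (Fin.last (p + q)) : ℕ) ≤ q := Nat.lt_succ_iff.mp (g _).isLt
      simp only [Fin.coe_castSucc, Fin.val_succ] at hlow hup
      have hkval := k.isLt
      -- exact step of 1
      have hone : (f k.succ : ℕ) + (g k.succ : ℕ)
          = (f k.castSucc : ℕ) + (g k.castSucc : ℕ) + 1 := by omega
      have hf := f.monotone (Fin.castSucc_le_succ k)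
      have hg := g.monotone (Fin.castSucc_le_succ k)
      rw [Fin.le_def] at hf hg
      rw [Xor', xor_def]
      simp only [Fin.ext_iff]
      omega
    · -- step condition → injective
      intro hx
      have hs : ∀ m : Fin (p + q), (f m.castSucc : ℕ) + (g m.castSucc : ℕ) + 1
          ≤ (f m.succ : ℕ) + (g m.succ : ℕ) := by
        intro m
        have := hx m
        rw [Xor', xor_def] at this
        rcases this with ⟨⟨h1, h2⟩, _⟩ | ⟨⟨h1, h2⟩, _⟩ <;> rw [Fin.ext_iff] at * <;> omega
      have hmono : StrictMono (fun i => (f i : ℕ) + (g i : ℕ)) := by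
        apply Fin.strictMono_iff_lt_succ.mpr
        intro m
        have := hs m
        omega
      intro a b hab
      simp only [Prod.mk.injEq] at hab
      apply hmono.injective
      simp only [hab.1, hab.2]
end

section
/- Let p, q be natural numbers. The set of nondegenerate (p+q)-simplices of Δ[p] × Δ[q] is in bijection with the set of (p,q)-shuffles, equivalently with the p-element subsets of Fin(p+q): the bijection sends a nondegenerate simplex, given by a pair of monotone maps (f, g) with f : Fin(p+q+1) → Fin(p+1) and g : Fin(p+q+1) → Fin(q+1), to the set {k ∈ Fin(p+q) | f(k+1) = f(k) + 1} of steps at which the first coordinate increases. In particular, the number of nondegenerate (p+q)-simplices of Δ[p] × Δ[q] equals the binomial coefficient (p+q choose p). -/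
/-- The type of nondegenerate `(p+q)`-simplices of `Δ[p] × Δ[q]`: pairs of monotone maps
`(f, g)` which do not factor (componentwise, with the same `k`) through any degeneracy
`σ_k = Fin.predAbove k`. -/
def NonDegPair (p q : ℕ) : Type :=
  {fg : (Fin (p + q + 1) →o Fin (p + 1)) × (Fin (p + q + 1) →o Fin (q + 1)) //
    ¬ ∃ (k : Fin (p + q)) (f' : Fin (p + q) →o Fin (p + 1)) (g' : Fin (p + q) →o Fin (q + 1)),
      (∀ i, fg.1 i = f' (k.predAbove i)) ∧ (∀ i, fg.2 i = g' (k.predAbove i))}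

namespace NonDegAux

open Finset

variable {n : ℕ}

/-- count of elements of `s` with value `< m` -/
def cnt (s : Finset (Fin n)) (m : ℕ) : ℕ := (s.filter (fun j => j.val < m)).card

lemma cnt_le_card (s : Finset (Fin n)) (m : ℕ) : cnt s m ≤ s.card :=
  Finset.card_le_card (Finset.filter_subset _ _)

lemma cnt_mono (s : Finset (Fin n)) : Monotone (cnt s) := fun a b hab =>
  Finset.card_le_card (Finset.monotone_filter_right s (fun j _ hj => lt_of_lt_of_le hj hab))

lemma cnt_step (s : Finset (Fin n)) (k : Fin n) :
    cnt s ((k : ℕ) + 1) = cnt s (k : ℕ) + if k ∈ s then 1 else 0 := by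
  classical
  have h1 : s.filter (fun j => j.val < (k : ℕ) + 1)
      = s.filter (fun j => j.val < (k : ℕ)) ∪ s.filter (fun j => j = k) := by
    ext j
    simp only [Finset.mem_union, Finset.mem_filter]
    constructor
    · rintro ⟨hj, hlt⟩
      rcases lt_or_eq_of_le (Nat.lt_succ_iff.mp hlt) with h | h
      · exact Or.inl ⟨hj, h⟩
      · exact Or.inr ⟨hj, Fin.ext h⟩
    · rintro (⟨hj, h⟩ | ⟨hj, h⟩)
      · exact ⟨hj, Nat.lt_succ_of_lt h⟩
      · exact ⟨hj, by simp [h]⟩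
  have hdisj : Disjoint (s.filter (fun j => j.val < (k : ℕ))) (s.filter (fun j => j = k)) := by
    rw [Finset.disjoint_left]
    intro a ha hb
    simp only [Finset.mem_filter] at ha hb
    rw [hb.2] at ha
    exact lt_irrefl _ ha.2
  rw [cnt, cnt, h1, Finset.card_union_of_disjoint hdisj, Finset.filter_eq' s k]
  split <;> simp

lemma cnt_univ (m : ℕ) (hm : m ≤ n) : cnt (univ : Finset (Fin n)) m = m := by
  induction m with
  | zero => simp [cnt]
  | succ m ih =>
    have hk : m < n := hm
    have h := cnt_step (univ : Finset (Fin n)) ⟨m, hk⟩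
    simp only [Finset.mem_univ, if_true] at h
    rw [h, ih (le_of_lt hk)]

lemma cnt_add_compl (s : Finset (Fin n)) (m : ℕ) (hm : m ≤ n) :
    cnt s m + cnt sᶜ m = m := by
  classical
  have hunion : s.filter (fun j => j.val < m) ∪ sᶜ.filter (fun j => j.val < m)
      = (univ : Finset (Fin n)).filter (fun j => j.val < m) := by
    rw [← Finset.filter_union, Finset.union_compl]
  have hdisj : Disjoint (s.filter (fun j => j.val < m)) (sᶜ.filter (fun j => j.val < m)) :=
    (disjoint_compl_right).mono (Finset.filter_subset _ _) (Finset.filter_subset _ _)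
  have := Finset.card_union_of_disjoint hdisj
  rw [hunion] at this
  rw [cnt, cnt, ← this]
  exact cnt_univ m hm

end NonDegAux

open NonDegAux Finset

section Forward

variable {p q : ℕ}

lemma nondeg_step (fg : NonDegPair p q) (k : Fin (p + q)) :
    ¬ (fg.1.1 k.castSucc = fg.1.1 k.succ ∧ fg.1.2 k.castSucc = fg.1.2 k.succ) := by
  rintro ⟨hf, hg⟩
  apply fg.2
  refine ⟨k, ⟨fun j => fg.1.1 (k.castSucc.succAbove j),
      fg.1.1.monotone.comp (Fin.strictMono_succAbove _).monotone⟩,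
    ⟨fun j => fg.1.2 (k.castSucc.succAbove j),
      fg.1.2.monotone.comp (Fin.strictMono_succAbove _).monotone⟩, ?_, ?_⟩
  · intro i
    by_cases h : i = k.castSucc
    · subst h
      simp only [OrderHom.coe_mk, Fin.predAbove_castSucc_self]
      rw [Fin.succAbove_of_le_castSucc _ _ le_rfl]
      exact hf
    · simp only [OrderHom.coe_mk, Fin.succAbove_predAbove h]
  · intro i
    by_cases h : i = k.castSucc
    · subst h
      simp only [OrderHom.coe_mk, Fin.predAbove_castSucc_self]
      rw [Fin.succAbove_of_le_castSucc _ _ le_rfl]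
      exact hg
    · simp only [OrderHom.coe_mk, Fin.succAbove_predAbove h]

lemma nondeg_step' (fg : NonDegPair p q) (k : Fin (p + q)) :
    (fg.1.1 k.castSucc : ℕ) + (fg.1.2 k.castSucc : ℕ) + 1
      ≤ (fg.1.1 k.succ : ℕ) + (fg.1.2 k.succ : ℕ) := by
  have h1 : fg.1.1 k.castSucc ≤ fg.1.1 k.succ := fg.1.1.monotone (Fin.castSucc_le_succ k)
  have h2 : fg.1.2 k.castSucc ≤ fg.1.2 k.succ := fg.1.2.monotone (Fin.castSucc_le_succ k)
  have h3 := nondeg_step fg k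
  rw [Fin.le_def] at h1 h2
  by_contra hc
  exact h3 ⟨Fin.ext (by omega), Fin.ext (by omega)⟩

lemma addval (fg : NonDegPair p q) (i : Fin (p + q + 1)) :
    (fg.1.1 i : ℕ) + (fg.1.2 i : ℕ) = i := by
  have lower : ∀ i : Fin (p + q + 1), (i : ℕ) ≤ (fg.1.1 i : ℕ) + (fg.1.2 i : ℕ) := by
    intro i
    induction i using Fin.induction with
    | zero => exact Nat.zero_le _
    | succ k ih =>
      have h := nondeg_step' fg k
      simp only [Fin.coe_castSucc, Fin.val_succ] at *
      omega
  have upper : ∀ i : Fin (p + q + 1), (fg.1.1 i : ℕ) + (fg.1.2 i : ℕ) ≤ (i : ℕ) := by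
    intro i
    induction i using Fin.reverseInduction with
    | last =>
      have h1 : (fg.1.1 (Fin.last (p + q)) : ℕ) ≤ p := Fin.is_le _
      have h2 : (fg.1.2 (Fin.last (p + q)) : ℕ) ≤ q := Fin.is_le _
      simp only [Fin.val_last]
      omega
    | cast k ih =>
      have h := nondeg_step' fg k
      simp only [Fin.coe_castSucc, Fin.val_succ] at *
      omega
  exact le_antisymm (upper i) (lower i)

lemma dichotomy (fg : NonDegPair p q) (k : Fin (p + q)) :
    ((fg.1.1 k.succ : ℕ) = (fg.1.1 k.castSucc : ℕ) + 1 ∧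
      (fg.1.2 k.succ : ℕ) = (fg.1.2 k.castSucc : ℕ)) ∨
    ((fg.1.1 k.succ : ℕ) = (fg.1.1 k.castSucc : ℕ) ∧
      (fg.1.2 k.succ : ℕ) = (fg.1.2 k.castSucc : ℕ) + 1) := by
  have h1 := addval fg k.castSucc
  have h2 := addval fg k.succ
  have h3 : fg.1.1 k.castSucc ≤ fg.1.1 k.succ := fg.1.1.monotone (Fin.castSucc_le_succ k)
  have h4 : fg.1.2 k.castSucc ≤ fg.1.2 k.succ := fg.1.2.monotone (Fin.castSucc_le_succ k)
  rw [Fin.le_def] at h3 h4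
  simp only [Fin.coe_castSucc, Fin.val_succ] at *
  omega

/-- the shuffle set of a nondegenerate pair -/
def Sset (fg : NonDegPair p q) : Finset (Fin (p + q)) :=
  Finset.univ.filter (fun k : Fin (p + q) =>
    (fg.1.1 k.succ : ℕ) = (fg.1.1 k.castSucc : ℕ) + 1)

lemma f_eq_cnt (fg : NonDegPair p q) (i : Fin (p + q + 1)) :
    (fg.1.1 i : ℕ) = cnt (Sset fg) (i : ℕ) := by
  induction i using Fin.induction with
  | zero =>
    have h := addval fg 0
    simp only [Fin.val_zero] at h
    simp [cnt]
    exact Fin.ext (by rw [Fin.val_zero]; omega)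
  | succ k ih =>
    have hstep := cnt_step (Sset fg) k
    have hmem : k ∈ Sset fg ↔ (fg.1.1 k.succ : ℕ) = (fg.1.1 k.castSucc : ℕ) + 1 := by
      simp [Sset]
    simp only [Fin.coe_castSucc] at ih
    rw [Fin.val_succ, hstep]
    by_cases hk : k ∈ Sset fg
    · rw [if_pos hk, hmem.mp hk, ih]
    · rcases dichotomy fg k with h | h
      · exact absurd (hmem.mpr h.1) hk
      · rw [if_neg hk, h.1, ih, Nat.add_zero]

lemma card_Sset (fg : NonDegPair p q) : (Sset fg).card = p := by
  have h1 : cnt (Sset fg) (p + q) = (Sset fg).card := by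
    rw [cnt, Finset.filter_true_of_mem (fun j _ => j.isLt)]
  have h2 := f_eq_cnt fg (Fin.last (p + q))
  have h3 := addval fg (Fin.last (p + q))
  have h4 : (fg.1.1 (Fin.last (p + q)) : ℕ) ≤ p := Fin.is_le _
  have h5 : (fg.1.2 (Fin.last (p + q)) : ℕ) ≤ q := Fin.is_le _
  simp only [Fin.val_last] at h2 h3
  omega

end Forward

section Backward

variable {p q : ℕ}

/-- the nondegenerate pair associated to a shuffle -/
def mkPair (s : Finset (Fin (p + q))) (hs : s.card = p) : NonDegPair p q :=
  ⟨(⟨fun i => ⟨cnt s i.val,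
        Nat.lt_succ_of_le (le_trans (cnt_le_card s i.val) (le_of_eq hs))⟩,
      fun a b hab => Fin.mk_le_mk.mpr (cnt_mono s hab)⟩,
    ⟨fun i => ⟨cnt sᶜ i.val,
        Nat.lt_succ_of_le (le_trans (cnt_le_card sᶜ i.val)
          (by rw [Finset.card_compl, hs, Fintype.card_fin]; omega))⟩,
      fun a b hab => Fin.mk_le_mk.mpr (cnt_mono sᶜ hab)⟩), by
    rintro ⟨k, f', g', hf, hg⟩
    have hfc := hf k.castSucc
    have hfs := hf k.succ
    have hgc := hg k.castSucc
    have hgs := hg k.succ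
    rw [Fin.predAbove_castSucc_self] at hfc hgc
    rw [Fin.predAbove_succ_self] at hfs hgs
    have hF : cnt s k.val = cnt s (k.val + 1) := by
      have h := hfc.trans hfs.symm
      have := congrArg Fin.val h
      exact this
    have hG : cnt sᶜ k.val = cnt sᶜ (k.val + 1) := by
      have h := hgc.trans hgs.symm
      have := congrArg Fin.val h
      exact this
    have hks := cnt_step s k
    have hksc := cnt_step sᶜ k
    by_cases hk : k ∈ s
    · rw [if_pos hk] at hks; omega
    · rw [if_pos (Finset.mem_compl.mpr hk)] at hksc; omega⟩

lemma Sset_mkPair (s : Finset (Fin (p + q))) (hs : s.card = p) :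
    Sset (mkPair s hs) = s := by
  classical
  ext k
  have hks := cnt_step s k
  have hmono : cnt s k.val ≤ cnt s (k.val + 1) := cnt_mono s (Nat.le_succ _)
  have hv1 : (((mkPair s hs).1.1 k.succ : Fin (p + 1)) : ℕ) = cnt s (k.val + 1) := rfl
  have hv2 : (((mkPair s hs).1.1 k.castSucc : Fin (p + 1)) : ℕ) = cnt s k.val := rfl
  simp only [Sset, Finset.mem_filter, Finset.mem_univ, true_and, hv1, hv2]
  constructor
  · intro h
    by_contra hk
    rw [if_neg hk] at hks
    omega
  · intro hk
    rw [if_pos hk] at hks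
    omega

end Backward

/-- The nondegenerate `(p+q)`-simplices of `Δ[p] × Δ[q]` are in bijection with
the `p`-element subsets of `Fin (p+q)` ((p,q)-shuffles), the bijection sending a simplex
`(f, g)` to the set of steps at which the first coordinate increases.  In particular the
number of nondegenerate `(p+q)`-simplices equals the binomial coefficient `(p+q).choose p`. -/
theorem nondegenerate_prod_simplex_shuffles (p q : ℕ) :
    Set.BijOn
      (fun fg : NonDegPair p q =>
        Finset.univ.filter (fun k : Fin (p + q) =>
          (fg.1.1 k.succ : ℕ) = (fg.1.1 k.castSucc : ℕ) + 1))
      Set.univ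
      {s : Finset (Fin (p + q)) | s.card = p} ∧
    Nat.card (NonDegPair p q) = Nat.choose (p + q) p := by
  classical
  have hmaps : Set.MapsTo
      (fun fg : NonDegPair p q =>
        Finset.univ.filter (fun k : Fin (p + q) =>
          (fg.1.1 k.succ : ℕ) = (fg.1.1 k.castSucc : ℕ) + 1))
      Set.univ {s : Finset (Fin (p + q)) | s.card = p} :=
    fun fg _ => card_Sset fg
  have hinj : Set.InjOn
      (fun fg : NonDegPair p q =>
        Finset.univ.filter (fun k : Fin (p + q) =>
          (fg.1.1 k.succ : ℕ) = (fg.1.1 k.castSucc : ℕ) + 1))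
      Set.univ := by
    intro a _ b _ hab
    have hS : Sset a = Sset b := hab
    have hf : ∀ i, (a.1.1 i : ℕ) = (b.1.1 i : ℕ) := by
      intro i
      rw [f_eq_cnt a i, f_eq_cnt b i, hS]
    have hg : ∀ i, (a.1.2 i : ℕ) = (b.1.2 i : ℕ) := by
      intro i
      have h1 := addval a i
      have h2 := addval b i
      have := hf i
      omega
    apply Subtype.ext
    apply Prod.ext
    · exact OrderHom.ext _ _ (funext fun i => Fin.ext (hf i))
    · exact OrderHom.ext _ _ (funext fun i => Fin.ext (hg i))
  have hsurj : Set.SurjOn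
      (fun fg : NonDegPair p q =>
        Finset.univ.filter (fun k : Fin (p + q) =>
          (fg.1.1 k.succ : ℕ) = (fg.1.1 k.castSucc : ℕ) + 1))
      Set.univ {s : Finset (Fin (p + q)) | s.card = p} := by
    intro s hs
    exact ⟨mkPair s hs, Set.mem_univ _, Sset_mkPair s hs⟩
  refine ⟨⟨hmaps, hinj, hsurj⟩, ?_⟩
  have e : NonDegPair p q ≃ {s : Finset (Fin (p + q)) // s.card = p} := by
    refine Equiv.ofBijective (fun fg => ⟨Sset fg, card_Sset fg⟩) ⟨?_, ?_⟩
    · intro a b hab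
      exact hinj (Set.mem_univ a) (Set.mem_univ b) (congrArg Subtype.val hab)
    · rintro ⟨s, hs⟩
      exact ⟨mkPair s hs, Subtype.ext (Sset_mkPair s hs)⟩
  rw [Nat.card_congr e, Nat.card_eq_fintype_card, Fintype.card_finset_len, Fintype.card_fin]
end
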